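/- arXiv:math/0409533 — 7 statements merged into one kernel-verified Lean document; each statement's English description precedes it below -/
import Mathlib

section
/- Let k be a field, m a natural number with char(k) ∤ m, and ω_m the number of m-th roots of unity in k. Then the splitting field of x^m - a over k has abelian Galois group over k if and only if a^{ω_m} = γ^m for some γ ∈ k. -/
open Polynomial
open scoped Classical


private lemma schinzel_aux1 (M W M' t Bs Bt Ds Dt : ℤ) (hW : W ≠ 0)
    (hM : M = W * M') (hs : W ∣ Ds) (ht : W ∣ Dt)
    (h2s : M ∣ W * Bs - t * Ds) (h2t : M ∣ W * Bt - t * Dt) :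
    M ∣ Bt * Ds - Bs * Dt := by
  obtain ⟨Es, rfl⟩ := hs
  obtain ⟨Et, rfl⟩ := ht
  obtain ⟨Ss, hSs⟩ := h2s
  obtain ⟨St, hSt⟩ := h2t
  rw [hM] at hSs hSt ⊢
  have hs' : Bs - t * Es = M' * Ss := by
    have : W * (Bs - t * Es) = W * (M' * Ss) := by ring_nf; ring_nf at hSs; linarith
    exact mul_left_cancel₀ hW this
  have ht' : Bt - t * Et = M' * St := by
    have : W * (Bt - t * Et) = W * (M' * St) := by ring_nf; ring_nf at hSt; linarith
    exact mul_left_cancel₀ hW this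
  refine ⟨St * Es - Ss * Et, ?_⟩
  have hbs : Bs = t * Es + M' * Ss := by linarith
  have hbt : Bt = t * Et + M' * St := by linarith
  rw [hbs, hbt]; ring

private lemma schinzel_bezout {G : Type*} [Fintype G] (M : ℤ) (B D : G → ℤ)
    (hM : 0 < M)
    (hc : ∀ σ τ : G, M ∣ B τ * D σ - B σ * D τ) :
    ∃ g b : ℤ, 0 ≤ g ∧ g ∣ M ∧ (∀ σ, g ∣ D σ) ∧ ∀ τ, M ∣ b * D τ - B τ * g := by
  classical
  suffices h : ∀ s : Finset G, ∃ g b : ℤ, 0 ≤ g ∧ g ∣ M ∧ (∀ σ ∈ s, g ∣ D σ) ∧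
      ∀ τ, M ∣ b * D τ - B τ * g by
    obtain ⟨g, b, h1, h2, h3, h4⟩ := h Finset.univ
    exact ⟨g, b, h1, h2, fun σ => h3 σ (Finset.mem_univ σ), h4⟩
  intro s
  induction s using Finset.induction with
  | empty =>
      exact ⟨M, 0, hM.le, dvd_rfl, by simp, fun τ => ⟨-B τ, by ring⟩⟩
  | @insert σ s hσs ih =>
      obtain ⟨g, b, h1, h2, h3, h4⟩ := ih
      refine ⟨Int.gcd (D σ) g, Int.gcdA (D σ) g * B σ + Int.gcdB (D σ) g * b, by positivity,
        dvd_trans (Int.gcd_dvd_right _ _) h2, ?_, ?_⟩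
      · intro σ' hσ'
        rcases Finset.mem_insert.mp hσ' with rfl | hσ'
        · exact Int.gcd_dvd_left _ _
        · exact dvd_trans (Int.gcd_dvd_right _ _) (h3 σ' hσ')
      · intro τ
        have hbez : (Int.gcd (D σ) g : ℤ) = D σ * Int.gcdA (D σ) g + g * Int.gcdB (D σ) g :=
          Int.gcd_eq_gcd_ab (D σ) g
        have e1 : M ∣ B σ * D τ - B τ * D σ := hc τ σ
        have e2 : M ∣ b * D τ - B τ * g := h4 τ
        have : (Int.gcdA (D σ) g * B σ + Int.gcdB (D σ) g * b) * D τ -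
            B τ * (Int.gcd (D σ) g : ℤ) =
            Int.gcdA (D σ) g * (B σ * D τ - B τ * D σ) +
            Int.gcdB (D σ) g * (b * D τ - B τ * g) := by rw [hbez]; ring
        rw [this]
        exact dvd_add (Dvd.dvd.mul_left e1 _) (Dvd.dvd.mul_left e2 _)

set_option maxHeartbeats 1000000 in
/-- Schinzel's theorem: the Galois group of `x^m - a` over `k` is abelian iff
`a^{ω_m}` is an `m`-th power in `k`, where `ω_m` is the number of `m`-th roots
of unity in `k`. -/
theorem stmt_3 {k K : Type*} [Field k] [Field K] [Algebra k K] (m : ℕ)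
    (hm0 : 0 < m) (hchar : ¬ (ringChar k ∣ m)) (a : k) (ha : a ≠ 0)
    (hsplit : Polynomial.IsSplittingField k K (X ^ m - C a)) :
    (∀ σ τ : K ≃ₐ[k] K, σ * τ = τ * σ) ↔
      ∃ γ : k, a ^ ((Polynomial.nthRoots m (1 : k)).toFinset.card) = γ ^ m := by
  haveI : NeZero m := ⟨hm0.ne'⟩
  haveI := hsplit
  have hmk : (m : k) ≠ 0 := fun h => hchar ((ringChar.spec k m).mp h)
  have hsep : (X ^ m - C a).Separable := separable_X_pow_sub_C a hmk ha
  haveI : FiniteDimensional k K := IsSplittingField.finiteDimensional K (X ^ m - C a)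
  haveI : IsGalois k K := IsGalois.of_separable_splitting_field hsep
  -- roots of X^m - a in K
  set a' : K := algebraMap k K a with ha'
  have ha'0 : a' ≠ 0 := by simpa [ha', _root_.map_eq_zero] using ha
  set fK : K[X] := X ^ m - C a' with hfK
  have hmap : (X ^ m - C a).map (algebraMap k K) = fK := by
    simp [fK, Polynomial.map_sub, Polynomial.map_pow, ha']
  have hsplits : Splits fK := by
    rw [← hmap]; exact (hsplit.splits)
  have hfK0 : fK ≠ 0 := X_pow_sub_C_ne_zero hm0 a'
  have hcard : Multiset.card fK.roots = m := by
    rw [(splits_iff_card_roots).mp hsplits, hfK, natDegree_X_pow_sub_C]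
  have hsepK : fK.Separable := by rw [← hmap]; exact hsep.map
  have hnodup : fK.roots.Nodup := nodup_roots hsepK
  obtain ⟨α, hαmem⟩ : ∃ α, α ∈ fK.roots := by
    apply Multiset.exists_mem_of_ne_zero
    intro h; rw [h] at hcard; simp at hcard; omega
  have hroot_pow : ∀ r ∈ fK.roots, r ^ m = a' := by
    intro r hr
    have := isRoot_of_mem_roots hr
    simpa [fK, sub_eq_zero] using this
  have hαm : α ^ m = a' := hroot_pow α hαmem
  have hα0 : α ≠ 0 := by
    intro h; rw [h, zero_pow hm0.ne'] at hαm; exact ha'0 hαm.symm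
  -- K contains m distinct m-th roots of unity
  have hTK : ((nthRoots m (1 : K)).toFinset.card) = m := by
    have hle : ((nthRoots m (1 : K)).toFinset.card) ≤ m :=
      le_trans (Multiset.toFinset_card_le _) (by simpa using Polynomial.card_nthRoots m (1 : K))
    have hinj : Function.Injective (fun r : K => r * α⁻¹) := fun x y h => by
      have := mul_right_cancel₀ (inv_ne_zero hα0) h
      exact this
    have hsub : Finset.image (fun r : K => r * α⁻¹) fK.roots.toFinset ⊆
        (nthRoots m (1 : K)).toFinset := by
      intro x hx
      obtain ⟨r, hr, rfl⟩ := Finset.mem_image.mp hx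
      rw [Multiset.mem_toFinset, mem_nthRoots hm0]
      have hr' := hroot_pow r (Multiset.mem_toFinset.mp hr)
      rw [mul_pow, hr', inv_pow, hαm]
      field_simp
    have hcards : (Finset.image (fun r : K => r * α⁻¹) fK.roots.toFinset).card = m := by
      rw [Finset.card_image_of_injective _ hinj, Multiset.toFinset_card_of_nodup hnodup, hcard]
    have := Finset.card_le_card hsub
    omega
  -- a primitive m-th root of unity in K
  obtain ⟨ζ, hζ⟩ : ∃ ζ : K, IsPrimitiveRoot ζ m := by
    obtain ⟨g, hg⟩ := IsCyclic.exists_generator (α := rootsOfUnity m K)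
    haveI : Fintype (rootsOfUnity m K) := Fintype.ofFinite _
    have hcardU : Fintype.card (rootsOfUnity m K) = m := by
      rw [Fintype.card_congr (rootsOfUnityEquivNthRoots K m)]
      have : Fintype.card {x // x ∈ nthRoots m (1 : K)} =
          ((nthRoots m (1 : K)).toFinset.card) := by
        rw [← Fintype.card_coe]
        exact Fintype.card_congr (Equiv.subtypeEquivRight (fun x => (Multiset.mem_toFinset).symm))
      rw [this, hTK]
    have hordg : orderOf g = m := by
      rw [orderOf_eq_card_of_forall_mem_zpowers hg, Nat.card_eq_fintype_card, hcardU]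
    refine ⟨(((g : Kˣ) : K)), ?_⟩
    have h2 : orderOf ((g : Kˣ)) = m :=
      (orderOf_injective (rootsOfUnity m K).subtype Subtype.coe_injective g).trans hordg
    have hpr := IsPrimitiveRoot.orderOf (g : Kˣ)
    rw [h2] at hpr
    exact IsPrimitiveRoot.coe_units_iff.mpr hpr
  have hζ0 : ζ ≠ 0 := by
    intro h
    have := hζ.pow_eq_one
    rw [h, zero_pow hm0.ne'] at this
    exact zero_ne_one this
  -- zpow helpers
  have hzone : ∀ A : ℤ, ζ ^ A = 1 ↔ (m : ℤ) ∣ A := fun A => hζ.zpow_eq_one_iff_dvd A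
  have hzeq : ∀ A B : ℤ, ζ ^ A = ζ ^ B ↔ (m : ℤ) ∣ A - B := by
    intro A B
    rw [← hzone (A - B), zpow_sub₀ hζ0, div_eq_one_iff_eq (zpow_ne_zero _ hζ0)]
  -- exponents b, c for each automorphism
  have key : ∀ σ : K ≃ₐ[k] K, ∃ bc : ℕ × ℕ, σ α = ζ ^ bc.1 * α ∧ σ ζ = ζ ^ bc.2 := by
    intro σ
    have h1 : (σ α / α) ^ m = 1 := by
      rw [div_pow, ← map_pow, hαm, ha']
      rw [AlgEquiv.commutes]
      exact div_self ha'0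
    obtain ⟨i, -, hi⟩ := hζ.eq_pow_of_pow_eq_one h1
    have h2 : (σ ζ) ^ m = 1 := by rw [← map_pow, hζ.pow_eq_one, map_one]
    obtain ⟨j, -, hj⟩ := hζ.eq_pow_of_pow_eq_one h2
    refine ⟨(i, j), ?_, hj.symm⟩
    rw [hi]
    field_simp
  choose bc hbα hcζ using key
  set b : (K ≃ₐ[k] K) → ℕ := fun σ => (bc σ).1 with hbdef
  set c : (K ≃ₐ[k] K) → ℕ := fun σ => (bc σ).2 with hcdef
  -- every m-th root of unity transforms by ζ ↦ ζ^c
  have hE1 : ∀ (σ : K ≃ₐ[k] K) (x : K), x ^ m = 1 → σ x = x ^ c σ := by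
    intro σ x hx
    obtain ⟨i, -, rfl⟩ := hζ.eq_pow_of_pow_eq_one hx
    rw [map_pow, hcζ σ, ← pow_mul, ← pow_mul, mul_comm]
  -- automorphisms are determined by images of α and ζ
  have hext : ∀ σ τ : K ≃ₐ[k] K, σ α = τ α → σ ζ = τ ζ → σ = τ := by
    intro σ τ h1 h2
    have hadj : Algebra.adjoin k ((X ^ m - C a).rootSet K) = ⊤ := hsplit.adjoin_rootSet
    have hle : Algebra.adjoin k ((X ^ m - C a).rootSet K) ≤
        AlgHom.equalizer (σ : K →ₐ[k] K) (τ : K →ₐ[k] K) := by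
      apply Algebra.adjoin_le
      intro r hr
      have hr' : r ^ m = a' := by
        have := (mem_rootSet.mp hr).2
        simpa [sub_eq_zero, ha'] using this
      have hru : (r / α) ^ m = 1 := by
        rw [div_pow, hr', hαm, div_self ha'0]
      obtain ⟨i, -, hi⟩ := hζ.eq_pow_of_pow_eq_one hru
      have hrζ : r = ζ ^ i * α := by rw [hi]; field_simp
      show σ r = τ r
      rw [hrζ, map_mul, map_mul, map_pow, map_pow, h1, h2]
    have : ∀ x : K, σ x = τ x := by
      intro x
      have hx : x ∈ Algebra.adjoin k ((X ^ m - C a).rootSet K) := by rw [hadj]; trivial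
      exact hle hx
    exact AlgEquiv.ext this
  -- commutation criterion
  have hcomm_iff : ∀ σ τ : K ≃ₐ[k] K, σ * τ = τ * σ ↔
      (m : ℤ) ∣ ((b τ : ℤ) * ((c σ : ℤ) - 1) - (b σ : ℤ) * ((c τ : ℤ) - 1)) := by
    intro σ τ
    have hστα : (σ * τ) α = ζ ^ (c σ * b τ + b σ) * α := by
      rw [AlgEquiv.mul_apply, hbα τ, map_mul, map_pow, hbα σ, hcζ σ, ← pow_mul, pow_add]
      ring
    have hτσα : (τ * σ) α = ζ ^ (c τ * b σ + b τ) * α := by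
      rw [AlgEquiv.mul_apply, hbα σ, map_mul, map_pow, hbα τ, hcζ τ, ← pow_mul, pow_add]
      ring
    have hστζ : (σ * τ) ζ = ζ ^ (c σ * c τ) := by
      rw [AlgEquiv.mul_apply, hcζ τ, map_pow, hcζ σ, ← pow_mul, mul_comm]
    have hτσζ : (τ * σ) ζ = ζ ^ (c σ * c τ) := by
      rw [AlgEquiv.mul_apply, hcζ σ, map_pow, hcζ τ, ← pow_mul, Nat.mul_comm]
    constructor
    · intro h
      have := congrArg (fun (ρ : K ≃ₐ[k] K) => ρ α) h
      simp only [hστα, hτσα] at this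
      have hpow : ζ ^ (c σ * b τ + b σ) = ζ ^ (c τ * b σ + b τ) :=
        mul_right_cancel₀ hα0 this
      have : ζ ^ ((c σ * b τ + b σ : ℕ) : ℤ) = ζ ^ ((c τ * b σ + b τ : ℕ) : ℤ) := by
        rw [zpow_natCast, zpow_natCast]; exact hpow
      have hdvd := (hzeq _ _).mp this
      have heq : ((c σ * b τ + b σ : ℕ) : ℤ) - ((c τ * b σ + b τ : ℕ) : ℤ) =
          (b τ : ℤ) * ((c σ : ℤ) - 1) - (b σ : ℤ) * ((c τ : ℤ) - 1) := by
        push_cast; ring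
      rwa [heq] at hdvd
    · intro hdvd
      apply hext
      · rw [hστα, hτσα]
        congr 1
        rw [← zpow_natCast ζ, ← zpow_natCast ζ]
        apply (hzeq _ _).mpr
        convert hdvd using 1
        push_cast; ring
      · rw [hστζ, hτσζ]
  set ω : ℕ := (Polynomial.nthRoots m (1 : k)).toFinset.card with hωdef
  -- the group of m-th roots of unity in k
  set Uk : Subgroup kˣ := (powMonoidHom m : kˣ →* kˣ).ker with hUk
  have hUkmem : ∀ u : kˣ, u ∈ Uk ↔ ((u : k)) ^ m = 1 := by
    intro u
    rw [hUk, MonoidHom.mem_ker, powMonoidHom_apply, Units.ext_iff,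
      Units.val_pow_eq_pow_val, Units.val_one]
  have hUkequiv : Uk ≃ {x : k // x ∈ (Polynomial.nthRoots m (1 : k)).toFinset} := by
    refine Equiv.ofBijective (fun u => ⟨((u : kˣ) : k), ?_⟩) ⟨?_, ?_⟩
    · rw [Multiset.mem_toFinset, mem_nthRoots hm0]
      exact (hUkmem u).mp u.2
    · intro u v h
      have : ((u : kˣ) : k) = ((v : kˣ) : k) := congrArg Subtype.val h
      exact Subtype.ext (Units.ext this)
    · rintro ⟨x, hx⟩
      rw [Multiset.mem_toFinset, mem_nthRoots hm0] at hx
      have hx0 : x ≠ 0 := by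
        intro h; rw [h, zero_pow hm0.ne'] at hx; exact zero_ne_one hx
      exact ⟨⟨Units.mk0 x hx0, (hUkmem _).mpr hx⟩, rfl⟩
  haveI : Fintype Uk := Fintype.ofEquiv _ hUkequiv.symm
  have hcardUk : Fintype.card Uk = ω := by
    rw [Fintype.card_congr hUkequiv]
    rw [hωdef, ← Fintype.card_coe]
  have hωpos : 0 < ω := by
    rw [← hcardUk]
    exact Fintype.card_pos_iff.mpr ⟨⟨1, by rw [hUkmem]; simp⟩⟩
  -- ω divides m
  have hωm : ω ∣ m := by
    obtain ⟨ξ, hξ⟩ := IsCyclic.exists_generator (α := Uk)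
    have hordξ : orderOf ξ = ω := by
      rw [orderOf_eq_card_of_forall_mem_zpowers hξ, Nat.card_eq_fintype_card, hcardUk]
    rw [← hordξ]
    apply orderOf_dvd_of_pow_eq_one
    have : ((ξ : kˣ) : k) ^ m = 1 := (hUkmem _).mp ξ.2
    have h2 : (ξ : kˣ) ^ m = 1 := by
      ext; rw [Units.val_pow_eq_pow_val]; exact this
    exact Subtype.ext (by rw [SubmonoidClass.coe_pow]; exact h2)
  -- each c σ is ≡ 1 mod ω
  have hF1 : ∀ σ : K ≃ₐ[k] K, (ω : ℤ) ∣ ((c σ : ℤ) - 1) := by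
    obtain ⟨ξ, hξ⟩ := IsCyclic.exists_generator (α := Uk)
    have hordξ : orderOf ξ = ω := by
      rw [orderOf_eq_card_of_forall_mem_zpowers hξ, Nat.card_eq_fintype_card, hcardUk]
    intro σ
    set ξ'' : Kˣ := Units.map (algebraMap k K).toMonoidHom (ξ : kˣ) with hξ''
    set ξ' : K := algebraMap k K ((ξ : kˣ) : k) with hξ'
    have hval : (ξ'' : K) = ξ' := rfl
    have hξ'm : ξ' ^ m = 1 := by
      rw [hξ', ← map_pow, (hUkmem _).mp ξ.2, map_one]
    have hfix : σ ξ' = ξ' := AlgEquiv.commutes σ _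
    have hpow : ξ' ^ c σ = ξ' := by rw [← hE1 σ ξ' hξ'm, hfix]
    have hpow'' : ξ'' ^ c σ = ξ'' := by
      ext; rw [Units.val_pow_eq_pow_val, hval]; exact hpow
    have hzpow : ξ'' ^ ((c σ : ℤ) - 1) = 1 := by
      rw [zpow_sub, zpow_natCast, zpow_one, hpow'', mul_inv_cancel]
    have hord : orderOf ξ'' = ω := by
      have e1 : orderOf ξ'' = orderOf (ξ'' : K) := orderOf_units.symm
      have e2 : orderOf (ξ'' : K) = orderOf (((ξ : kˣ) : k)) := by
        rw [hval, hξ']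
        exact orderOf_injective (algebraMap k K).toMonoidHom (algebraMap k K).injective _
      have e3 : orderOf (((ξ : kˣ) : k)) = orderOf (ξ : kˣ) := orderOf_units
      have e4 : orderOf (ξ : kˣ) = orderOf ξ :=
        orderOf_injective Uk.subtype Subtype.coe_injective ξ
      rw [e1, e2, e3, e4, hordξ]
    rw [← hord]
    exact orderOf_dvd_iff_zpow_eq_one.mpr hzpow
  -- fixed elements come from k
  have hfixed : ∀ x : K, (∀ σ : K ≃ₐ[k] K, σ x = x) → ∃ y : k, algebraMap k K y = x := by
    intro x hx
    have hbot : x ∈ (⊥ : IntermediateField k K) := by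
      rw [← OrderIso.map_bot (IsGalois.intermediateFieldEquivSubgroup (F := k) (E := K)).symm]
      rintro ⟨σ, hσ⟩
      rw [Subgroup.smul_def, AlgEquiv.smul_def]
      exact hx σ
    exact IntermediateField.mem_bot.mp hbot
  have goal : (∀ σ τ : K ≃ₐ[k] K, σ * τ = τ * σ) ↔ ∃ γ : k, a ^ ω = γ ^ m := by
    constructor
    · -- abelian implies a^ω is an m-th power
      intro hab
      have hc2 : ∀ σ τ : K ≃ₐ[k] K,
          (m : ℤ) ∣ ((b τ : ℤ) * ((c σ : ℤ) - 1) - (b σ : ℤ) * ((c τ : ℤ) - 1)) :=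
        fun σ τ => (hcomm_iff σ τ).mp (hab σ τ)
      obtain ⟨g, b0, hg0, hgM, hgD, hrel⟩ :=
        schinzel_bezout (m : ℤ) (fun σ => (b σ : ℤ)) (fun σ => (c σ : ℤ) - 1)
          (by exact_mod_cast hm0) hc2
      have hgne : g ≠ 0 := by
        rintro rfl
        rw [zero_dvd_iff] at hgM
        exact_mod_cast hm0.ne' (by exact_mod_cast hgM)
      set gn : ℕ := g.toNat with hgndef
      have hgnz : (gn : ℤ) = g := Int.toNat_of_nonneg hg0
      have hgnm : gn ∣ m := by
        rw [← Int.natCast_dvd_natCast, hgnz]; exact hgM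
      have hgnpos : 0 < gn := Nat.pos_of_ne_zero (by
        intro h; apply hgne; rw [← hgnz, h]; rfl)
      set e : ℕ := m / gn with hedef
      have hem : gn * e = m := Nat.mul_div_cancel' hgnm
      have hepos : 0 < e := by
        rcases Nat.eq_zero_or_pos e with h | h
        · rw [h, Nat.mul_zero] at hem; omega
        · exact h
      -- ζ^e is fixed by all automorphisms
      have hfixe : ∀ σ : K ≃ₐ[k] K, σ (ζ ^ e) = ζ ^ e := by
        intro σ
        rw [map_pow, hcζ σ, ← pow_mul]
        rw [← zpow_natCast ζ (c σ * e), ← zpow_natCast ζ e]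
        apply (hzeq _ _).mpr
        obtain ⟨q, hq⟩ := hgD σ
        refine ⟨q, ?_⟩
        have hme : (m : ℤ) = (e : ℤ) * g := by
          rw [← hem]; push_cast [hgnz]; ring
        have : ((c σ * e : ℕ) : ℤ) - ((e : ℕ) : ℤ) = (e : ℤ) * ((c σ : ℤ) - 1) := by
          push_cast; ring
        rw [this, hq, hme]; ring
      obtain ⟨y, hy⟩ := hfixed _ hfixe
      have hym : y ^ m = 1 := by
        apply (algebraMap k K).injective
        rw [map_pow, hy, map_one, ← pow_mul, mul_comm e m, pow_mul, hζ.pow_eq_one, one_pow]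
      have hy0 : y ≠ 0 := by
        intro h; rw [h, zero_pow hm0.ne'] at hym; exact zero_ne_one hym
      -- gn divides ω
      have hgnω : gn ∣ ω := by
        have hordζe : orderOf (ζ ^ e) = gn := by
          have hoζ : orderOf ζ = m := hζ.eq_orderOf.symm
          rw [orderOf_pow' ζ hepos.ne', hoζ]
          have hgcd : Nat.gcd m e = e := Nat.gcd_eq_right ⟨gn, by rw [← hem]; ring⟩
          rw [hgcd, ← hem, Nat.mul_div_cancel _ hepos]
        have hordy : orderOf y = gn := by
          rw [← hordζe, ← hy]
          exact (orderOf_injective (algebraMap k K).toMonoidHom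
            (algebraMap k K).injective y).symm
        set yu : kˣ := Units.mk0 y hy0 with hyu
        have hyumem : yu ∈ Uk := (hUkmem yu).mpr hym
        have hordyu : orderOf (⟨yu, hyumem⟩ : Uk) = gn := by
          have e3 := orderOf_injective Uk.subtype Subtype.coe_injective
            (⟨yu, hyumem⟩ : Uk)
          have e2 : orderOf yu = gn := by
            rw [← orderOf_units]; exact hordy
          exact e3.symm.trans e2
        rw [← hordyu, ← hcardUk]
        exact orderOf_dvd_card
      obtain ⟨W', hW'⟩ : (g : ℤ) ∣ (ω : ℤ) := by
        rw [← hgnz, Int.natCast_dvd_natCast]; exact hgnω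
      -- the element α^ω ζ^(-W'·b0) is fixed by all automorphisms
      have hfixγ : ∀ σ : K ≃ₐ[k] K, σ (α ^ ω * ζ ^ (-(W' * b0))) = α ^ ω * ζ ^ (-(W' * b0)) := by
        intro σ
        rw [map_mul, map_pow, hbα σ, map_zpow₀, hcζ σ]
        have h2 : (ζ ^ b σ * α) ^ ω = ζ ^ (b σ * ω) * α ^ ω := by
          rw [mul_pow, pow_mul]
        have h3 : ((ζ ^ c σ : K)) ^ (-(W' * b0)) = ζ ^ ((c σ : ℤ) * (-(W' * b0))) := by
          rw [← zpow_natCast ζ (c σ), ← zpow_mul]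
        have h4 : (ζ : K) ^ (b σ * ω) = ζ ^ ((b σ * ω : ℕ) : ℤ) := (zpow_natCast _ _).symm
        rw [h2, h3, h4]
        have h5 : ζ ^ ((b σ * ω : ℕ) : ℤ) * α ^ ω * ζ ^ ((c σ : ℤ) * (-(W' * b0))) =
            α ^ ω * (ζ ^ ((b σ * ω : ℕ) : ℤ) * ζ ^ ((c σ : ℤ) * (-(W' * b0)))) := by ring
        rw [h5, ← zpow_add₀ hζ0]
        congr 1
        apply (hzeq _ _).mpr
        obtain ⟨s, hs⟩ := hrel σ
        refine ⟨-W' * s, ?_⟩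
        push_cast
        linear_combination (-W' : ℤ) * hs + (b σ : ℤ) * hW'
      obtain ⟨γ, hγ⟩ := hfixed _ hfixγ
      refine ⟨γ, ?_⟩
      apply (algebraMap k K).injective
      rw [map_pow, map_pow, hγ, mul_pow, ← pow_mul, mul_comm ω m, pow_mul, hαm, ← ha']
      rw [← zpow_natCast (ζ ^ (-(W' * b0))), ← zpow_mul]
      have : ζ ^ (-(W' * b0) * (m : ℤ)) = 1 := (hzone _).mpr ⟨-(W' * b0), by ring⟩
      rw [this, mul_one]
    · -- a^ω an m-th power implies abelian
      rintro ⟨γ, hγ⟩ σ τ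
      apply (hcomm_iff σ τ).mpr
      have hγ0 : γ ≠ 0 := by
        intro h
        rw [h, zero_pow hm0.ne'] at hγ
        exact pow_ne_zero ω ha hγ
      set γ' : K := algebraMap k K γ with hγ'
      have hγ'0 : γ' ≠ 0 := by
        simp [hγ', _root_.map_eq_zero, hγ0]
      have hquot : (α ^ ω / γ') ^ m = 1 := by
        rw [div_pow, ← pow_mul, mul_comm ω m, pow_mul, hαm, ha', ← map_pow, ← map_pow, ← hγ,
          map_pow, div_self]
        rw [ha'] at ha'0
        exact pow_ne_zero ω ha'0
      obtain ⟨t, -, ht⟩ := hζ.eq_pow_of_pow_eq_one hquot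
      have hαω : α ^ ω = ζ ^ t * γ' := by
        rw [ht]; field_simp
      have hcong : ∀ ρ : K ≃ₐ[k] K,
          (m : ℤ) ∣ (ω : ℤ) * (b ρ : ℤ) - (t : ℤ) * ((c ρ : ℤ) - 1) := by
        intro ρ
        have happ : ρ (α ^ ω) = ζ ^ (b ρ * ω) * α ^ ω := by
          rw [map_pow, hbα ρ, mul_pow, pow_mul]
        have happ2 : ρ (α ^ ω) = ζ ^ (t * c ρ) * γ' := by
          rw [hαω, map_mul, map_pow, hcζ ρ, hγ', AlgEquiv.commutes, ← pow_mul, Nat.mul_comm]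
        have hcomb : ζ ^ (b ρ * ω) * (ζ ^ t * γ') = ζ ^ (t * c ρ) * γ' := by
          rw [← hαω, ← happ, happ2]
        have hcomb' : ζ ^ (b ρ * ω) * ζ ^ t * γ' = ζ ^ (t * c ρ) * γ' := by
          rw [mul_assoc]; exact hcomb
        have hζeq : ζ ^ (b ρ * ω + t) = ζ ^ (t * c ρ) := by
          rw [pow_add]
          exact mul_right_cancel₀ hγ'0 hcomb' 
        have : ζ ^ ((b ρ * ω + t : ℕ) : ℤ) = ζ ^ ((t * c ρ : ℕ) : ℤ) := by
          rw [zpow_natCast, zpow_natCast]; exact hζeq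
        have hdvd := (hzeq _ _).mp this
        have heq : ((b ρ * ω + t : ℕ) : ℤ) - ((t * c ρ : ℕ) : ℤ) =
            (ω : ℤ) * (b ρ : ℤ) - (t : ℤ) * ((c ρ : ℤ) - 1) := by push_cast; ring
        rwa [heq] at hdvd
      obtain ⟨m', hm'⟩ := hωm
      exact schinzel_aux1 (m : ℤ) (ω : ℤ) (m' : ℤ) (t : ℤ) (b σ : ℤ) (b τ : ℤ)
        ((c σ : ℤ) - 1) ((c τ : ℤ) - 1)
        (by exact_mod_cast hωpos.ne') (by exact_mod_cast hm') (hF1 σ) (hF1 τ)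
        (hcong σ) (hcong τ)
  exact goal
end

section
/- If m is odd and a ∈ ℚ is not a p-th power in ℚ for every prime p dividing m, then x^m - a is irreducible over ℚ(ζ_m), and hence [ℚ(ζ_m, a^{1/m}) : ℚ] = φ(m)·m. -/
open Polynomial IntermediateField


set_option maxHeartbeats 1000000 in
set_option synthInstance.maxHeartbeats 200000 in
private lemma aux_no_pth_root {F K : Type*} [Field F] [Field K] [Algebra F K]
    [CharZero F] [FiniteDimensional F K] [IsGalois F K]
    (hcomm : ∀ σ τ : K ≃ₐ[F] K, σ * τ = τ * σ)
    {p : ℕ} (hp : p.Prime) (hp2 : p ≠ 2) {a : F}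
    (ha' : ∀ c : F, c ^ p ≠ a)
    (hcyclo : ∀ η : K, IsPrimitiveRoot η p → (minpoly F η).natDegree = p - 1)
    (b : K) (hb : b ^ p = algebraMap F K a) : False := by
  classical
  have hp3 : 3 ≤ p := by
    have h2 := hp.two_le
    omega
  have hanz : a ≠ 0 := by
    rintro rfl
    exact ha' 0 (by simp [hp.ne_zero])
  have hirr : Irreducible (X ^ p - C a) := X_pow_sub_C_irreducible_of_prime hp ha'
  have haev : (Polynomial.aeval b) (X ^ p - C a) = 0 := by
    simp [hb]
  have hbint : IsIntegral F b := ⟨X ^ p - C a, monic_X_pow_sub_C a hp.ne_zero, haev⟩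
  have hmin : minpoly F b = X ^ p - C a :=
    (minpoly.eq_of_irreducible_of_monic hirr haev (monic_X_pow_sub_C a hp.ne_zero)).symm
  set E := (F⟮b⟯ : IntermediateField F K) with hEdef
  haveI : FiniteDimensional F E := IntermediateField.adjoin.finiteDimensional hbint
  have hEfin : Module.finrank F E = p := by
    rw [hEdef, IntermediateField.adjoin.finrank hbint, hmin, natDegree_X_pow_sub_C]
  haveI hnormal : Subgroup.Normal (fixingSubgroup E) := by
    constructor
    intro g hg h
    have : h * g * h⁻¹ = g := by
      rw [hcomm h g, mul_assoc, mul_inv_cancel, mul_one]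
    rwa [this]
  haveI : IsGalois F E := by
    rw [← IsGalois.fixedField_fixingSubgroup E]
    exact IsGalois.of_fixedField_normal_subgroup (fixingSubgroup E)
  have hsplits : Splits ((X ^ p - C a).map (algebraMap F E)) := by
    have hN : Normal F E := inferInstance
    have h := hN.splits (AdjoinSimple.gen F b)
    rwa [IntermediateField.minpoly_gen F b, hmin] at h
  clear_value E
  set q : E[X] := (X ^ p - C a).map (algebraMap F E) with hqdef
  have hqne : q ≠ 0 := by
    apply Polynomial.map_ne_zero
    exact (monic_X_pow_sub_C a hp.ne_zero).ne_zero
  have hqcard : q.roots.card = p := by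
    have := (Polynomial.splits_iff_card_roots (f := q)).mp
      hsplits
    rwa [hqdef, natDegree_map, natDegree_X_pow_sub_C] at this
  have hnodup : q.roots.Nodup := nodup_roots (hirr.separable.map)
  obtain ⟨r, hr, s, hs, hrs⟩ : ∃ r ∈ q.roots.toFinset, ∃ s ∈ q.roots.toFinset, r ≠ s := by
    apply Finset.one_lt_card.mp
    rw [Multiset.toFinset_card_of_nodup hnodup, hqcard]
    omega
  have hroot : ∀ x : E, x ∈ q.roots.toFinset → x ^ p = algebraMap F E a := by
    intro x hx
    have this := (Polynomial.mem_roots hqne).mp (Multiset.mem_toFinset.mp hx)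
    rw [hqdef, Polynomial.IsRoot, Polynomial.eval_map, Polynomial.eval₂_sub,
      Polynomial.eval₂_pow, Polynomial.eval₂_X, Polynomial.eval₂_C, sub_eq_zero] at this
    exact this
  have hrp := hroot r hr
  have hsp := hroot s hs
  have hs0 : s ≠ 0 := by
    rintro rfl
    rw [zero_pow hp.ne_zero] at hsp
    exact hanz ((_root_.map_eq_zero (algebraMap F E)).mp hsp.symm)
  set η : E := r / s with hηdef
  have hηp : η ^ p = 1 := by
    rw [hηdef, div_pow, hrp, hsp, div_self]
    rw [Ne, _root_.map_eq_zero]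
    exact hanz
  have hη1 : η ≠ 1 := by
    intro h
    rw [hηdef, div_eq_one_iff_eq hs0] at h
    exact hrs h
  have hord : orderOf η = p := by
    rcases hp.eq_one_or_self_of_dvd _ (orderOf_dvd_of_pow_eq_one hηp) with h | h
    · exact absurd (orderOf_eq_one_iff.mp h) hη1
    · exact h
  have hηprim : IsPrimitiveRoot η p := hord ▸ IsPrimitiveRoot.orderOf η
  have hηint : IsIntegral F η := IsIntegral.of_finite F η
  have hηK : IsPrimitiveRoot (algebraMap E K η) p :=
    hηprim.map_of_injective (algebraMap E K).injective
  have hminKE : minpoly F (algebraMap E K η) = minpoly F η :=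
    minpoly.algebraMap_eq (algebraMap E K).injective η
  have hd := IntermediateField.adjoin.finrank hηint
  rw [← hminKE, hcyclo _ hηK] at hd
  have hdvd : Module.finrank F (↥F⟮η⟯) ∣ Module.finrank F (↥E) :=
    ⟨Module.finrank (↥F⟮η⟯) (↥E), (Module.finrank_mul_finrank F (↥F⟮η⟯) (↥E)).symm⟩
  rw [hd, hEfin] at hdvd
  have h1 : (p - 1) ∣ 1 := by
    have h2 : p - (p - 1) = 1 := by omega
    have h3 := Nat.dvd_sub hdvd (dvd_refl (p - 1))
    rwa [h2] at h3
  have := Nat.le_of_dvd one_pos h1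
  omega

theorem stmt_5 (m : ℕ) (hm : Odd m) (hm0 : 0 < m) (a : ℚ)
    (ha : ∀ p : ℕ, p.Prime → p ∣ m → ¬ ∃ b : ℚ, b ^ p = a)
    {K : Type*} [Field K] [Algebra ℚ K] (ζ : K) (hζ : IsPrimitiveRoot ζ m)
    (hKgen : IntermediateField.adjoin ℚ ({ζ} : Set K) = ⊤)
    {L : Type*} [Field L] [Algebra ℚ L] [Algebra K L] [IsScalarTower ℚ K L]
    (α : L) (hα : α ^ m = algebraMap ℚ L a)
    (hLgen : IntermediateField.adjoin K ({α} : Set L) = ⊤) :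
    Irreducible (X ^ m - C (algebraMap ℚ K a)) ∧
      Module.finrank ℚ L = Nat.totient m * m := by
  classical
  set n : ℕ+ := ⟨m, hm0⟩ with hn
  have hζ' : IsPrimitiveRoot ζ (n : ℕ) := hζ
  have hζint : IsIntegral ℚ ζ := by
    refine ⟨X ^ m - 1, ?_, ?_⟩
    · simpa using monic_X_pow_sub_C (1 : ℚ) hm0.ne'
    · simp [hζ.pow_eq_one]
  haveI hcyc : IsCyclotomicExtension {(n : ℕ)} ℚ K := by
    rw [IsCyclotomicExtension.iff_adjoin_eq_top]
    refine ⟨fun n' hn' _ => ?_, ?_⟩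
    · rw [Set.mem_singleton_iff] at hn'
      subst hn'
      exact ⟨ζ, hζ'⟩
    · have h1 : Algebra.adjoin ℚ ({ζ} : Set K) = ⊤ := by
        rw [← IntermediateField.adjoin_simple_toSubalgebra_of_isAlgebraic hζint.isAlgebraic]
        rw [show (ℚ⟮ζ⟯ : IntermediateField ℚ K) = ⊤ from hKgen]
        rfl
      rw [eq_top_iff, ← h1]
      exact Algebra.adjoin_mono (by
        rintro x rfl
        exact ⟨(n : ℕ), Set.mem_singleton _, hm0.ne', hζ.pow_eq_one⟩)
  haveI : FiniteDimensional ℚ K := IsCyclotomicExtension.finiteDimensional {(n : ℕ)} ℚ K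
  haveI : IsGalois ℚ K := IsCyclotomicExtension.isGalois {(n : ℕ)} ℚ K
  have hcomm : ∀ σ τ : (K ≃ₐ[ℚ] K), σ * τ = τ * σ := by
    intro σ τ
    apply hζ'.autToPow_injective ℚ
    rw [map_mul, map_mul, mul_comm]
  have key : ∀ p : ℕ, p.Prime → p ∣ m → ∀ b : K, b ^ p ≠ algebraMap ℚ K a := by
    intro p hp hpm b hb
    have hp2 : p ≠ 2 := by
      rintro rfl
      rw [Nat.odd_iff] at hm
      obtain ⟨k, rfl⟩ := hpm
      omega
    have ha' : ∀ c : ℚ, c ^ p ≠ a := fun c hc => ha p hp hpm ⟨c, hc⟩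
    haveI : CharZero K := charZero_of_injective_algebraMap (algebraMap ℚ K).injective
    have hcyclo : ∀ η : K, IsPrimitiveRoot η p → (minpoly ℚ η).natDegree = p - 1 := by
      intro η hη
      have h1 := cyclotomic_eq_minpoly_rat hη hp.pos
      have h2 : minpoly ℚ η = cyclotomic p ℚ :=
        (congrArg (fun i : Algebra ℚ K => @minpoly ℚ K _ _ i η)
          (Subsingleton.elim _ _)).trans h1.symm
      rw [h2, natDegree_cyclotomic, Nat.totient_prime hp]
    exact aux_no_pth_root hcomm hp hp2 ha' hcyclo b hb
  have hirrK : Irreducible (X ^ m - C (algebraMap ℚ K a)) :=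
    X_pow_sub_C_irreducible_of_odd hm key
  refine ⟨hirrK, ?_⟩
  have ha2 : α ^ m = algebraMap K L (algebraMap ℚ K a) := by
    rw [hα, IsScalarTower.algebraMap_apply ℚ K L]
  have haevα : (Polynomial.aeval α) (X ^ m - C (algebraMap ℚ K a)) = 0 := by
    simp [ha2]
  have hαint : IsIntegral K α :=
    ⟨X ^ m - C (algebraMap ℚ K a), monic_X_pow_sub_C _ hm0.ne', haevα⟩
  have hminα : minpoly K α = X ^ m - C (algebraMap ℚ K a) :=
    (minpoly.eq_of_irreducible_of_monic hirrK haevα (monic_X_pow_sub_C _ hm0.ne')).symm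
  have hKL : Module.finrank K L = m := by
    have h1 : Module.finrank K (K⟮α⟯ : IntermediateField K L) = m := by
      rw [IntermediateField.adjoin.finrank hαint, hminα, natDegree_X_pow_sub_C]
    rwa [hLgen, IntermediateField.finrank_top'] at h1
  haveI : FiniteDimensional K L := by
    have h2 := IntermediateField.adjoin.finiteDimensional hαint
    rw [hLgen] at h2
    exact (IntermediateField.topEquiv (F := K) (E := L)).toLinearEquiv.finiteDimensional
  have hQK : Module.finrank ℚ K = Nat.totient m :=
    IsCyclotomicExtension.finrank (n := n) K (cyclotomic.irreducible_rat hm0)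
  rw [← Module.finrank_mul_finrank ℚ K L, hQK, hKL]
end

section
/- If x^m - a is irreducible over ℚ with m odd, then Gal(ℚ(ζ_m, a^{1/m})/ℚ) is isomorphic to the semidirect product (ℤ/mℤ) ⋊ (ℤ/mℤ)^×, where (ℤ/mℤ)^× acts on ℤ/mℤ by multiplication. -/
attribute [-instance] DivisionRing.toRatAlgebra

open Polynomial

/-- The action of `(ℤ/mℤ)ˣ` on `ℤ/mℤ` by multiplication, as a map into the
automorphisms of the (multiplicatively written) cyclic group of order `m`. -/
def holMap (m : ℕ) : (ZMod m)ˣ →* MulAut (Multiplicative (ZMod m)) where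
  toFun u := AddEquiv.toMultiplicative (DistribMulAction.toAddAut (ZMod m)ˣ (ZMod m) u)
  map_one' := by ext x; simp
  map_mul' u v := by ext x; simp [mul_smul]


lemma exists_primroot {L : Type*} [Field L] [Algebra ℚ L] {n : ℕ} (hn : 0 < n)
    {c : ℚ} (hc : c ≠ 0) (hs : Splits ((X ^ n - C c).map (algebraMap ℚ L))) :
    ∃ ζ : L, IsPrimitiveRoot ζ n := by
  haveI : NeZero n := ⟨hn.ne'⟩
  set f : L[X] := (X ^ n - C c).map (algebraMap ℚ L) with hf
  have hnq : (n : ℚ) ≠ 0 := Nat.cast_ne_zero.mpr hn.ne'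
  have hcard : f.roots.card = n := by
    rw [← hs.natDegree_eq_card_roots, hf, natDegree_map, natDegree_X_pow_sub_C]
  have hnodup : f.roots.Nodup :=
    nodup_roots ((separable_X_pow_sub_C c hnq hc).map)
  have hroot : ∀ r ∈ f.roots, r ^ n = algebraMap ℚ L c := by
    intro r hr
    have := isRoot_of_mem_roots hr
    rw [hf] at this
    simpa [sub_eq_zero] using this
  obtain ⟨r₀, hr₀⟩ : ∃ r₀, r₀ ∈ f.roots := by
    rcases Multiset.card_pos_iff_exists_mem.mp (by rw [hcard]; exact hn) with ⟨r, hr⟩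
    exact ⟨r, hr⟩
  have hr₀n : r₀ ^ n = algebraMap ℚ L c := hroot r₀ hr₀
  have hr₀0 : r₀ ≠ 0 := by
    rintro rfl
    rw [zero_pow hn.ne'] at hr₀n
    exact hc ((_root_.map_eq_zero (algebraMap ℚ L)).mp hr₀n.symm)
  -- the multiset of n-th roots of unity obtained as ratios
  set S : Multiset L := f.roots.map (· * r₀⁻¹) with hS
  have hSnodup : S.Nodup := hnodup.map (mul_left_injective₀ (inv_ne_zero hr₀0))
  have hScard : S.card = n := by rw [hS, Multiset.card_map, hcard]
  have hSpow : ∀ x ∈ S, x ^ n = 1 := by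
    intro x hx
    rw [hS] at hx
    obtain ⟨r, hr, rfl⟩ := Multiset.mem_map.mp hx
    have hc0 : algebraMap ℚ L c ≠ 0 := fun h => hc ((_root_.map_eq_zero (algebraMap ℚ L)).mp h)
    rw [mul_pow, hroot r hr, inv_pow, hr₀n, mul_inv_cancel₀ hc0]
  -- the group of roots of unity
  obtain ⟨g, hg⟩ := IsCyclic.exists_generator (α := rootsOfUnity n L)
  set d := orderOf g with hd
  have hd0 : 0 < d := orderOf_pos g
  have hdn : d ∣ n := orderOf_dvd_of_pow_eq_one (by
    ext; exact (mem_rootsOfUnity' n g.1).mp g.2)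
  have hSd : ∀ x ∈ S, x ^ d = 1 := by
    intro x hx
    have hxu : IsUnit x := IsUnit.of_pow_eq_one (hSpow x hx) hn.ne'
    obtain ⟨u, rfl⟩ := hxu
    have hu : u ∈ rootsOfUnity n L := (mem_rootsOfUnity' n u).mpr (hSpow u hx)
    obtain ⟨k, hk⟩ := Subgroup.mem_zpowers_iff.mp (hg ⟨u, hu⟩)
    have : (⟨u, hu⟩ : rootsOfUnity n L) ^ d = 1 := by
      rw [← hk, ← zpow_natCast, ← zpow_mul, mul_comm, zpow_mul, zpow_natCast,
        pow_orderOf_eq_one, one_zpow]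
    have h2 : u ^ d = 1 := by
      have h3 := congrArg (fun z : rootsOfUnity n L => (z : Lˣ)) this
      simpa using h3
    have h4 := congrArg Units.val h2
    simpa using h4
  have hle : S ≤ nthRoots d (1 : L) := (Multiset.le_iff_subset hSnodup).mpr (by
    intro x hx
    rw [mem_nthRoots hd0]
    exact hSd x hx)
  have hnd : n ≤ d := by
    calc n = S.card := hScard.symm
    _ ≤ (nthRoots d (1 : L)).card := Multiset.card_le_card hle
    _ ≤ d := card_nthRoots d 1
  have hdn' : d = n := le_antisymm (Nat.le_of_dvd hn hdn) hnd
  refine ⟨((g : Lˣ) : L), ?_⟩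
  have horder : orderOf ((g : Lˣ) : L) = n := by
    rw [orderOf_units, Subgroup.orderOf_coe, ← hd, hdn']
  have := IsPrimitiveRoot.orderOf ((g : Lˣ) : L)
  rwa [horder] at this

lemma aux_primroot_rank {E : Type*} [Field E] [Algebra ℚ E] [FiniteDimensional ℚ E] {p : ℕ}
    (hp : p.Prime) (hp2 : p ≠ 2) {ζp : E} (hζp : IsPrimitiveRoot ζp p)
    (hrank : Module.finrank ℚ E = p) : False := by
  haveI : CharZero E := charZero_of_injective_algebraMap (algebraMap ℚ E).injective
  have hζpint : IsIntegral ℚ ζp := IsIntegral.of_finite ℚ ζp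
  have halg : DivisionRing.toRatAlgebra = (inferInstance : Algebra ℚ E) :=
    Subsingleton.elim _ _
  have hcm := cyclotomic_eq_minpoly_rat hζp hp.pos
  rw [halg] at hcm
  have h1 : Module.finrank ℚ (IntermediateField.adjoin ℚ ({ζp} : Set E)) = p - 1 := by
    rw [IntermediateField.adjoin.finrank hζpint, ← hcm,
      natDegree_cyclotomic, Nat.totient_prime hp]
  have hdvd : (p - 1) ∣ p := by
    refine ⟨Module.finrank (IntermediateField.adjoin ℚ ({ζp} : Set E)) E, ?_⟩
    rw [← h1, ← hrank]
    exact (Module.finrank_mul_finrank ℚ (IntermediateField.adjoin ℚ ({ζp} : Set E)) E).symm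
  have h2 : (p - 1) ∣ 1 := by
    have := Nat.dvd_sub hdvd dvd_rfl
    rwa [Nat.sub_sub_self hp.one_lt.le] at this
  have h3 := Nat.le_of_dvd one_pos h2
  have h4 := hp.two_le
  omega

lemma irreducible_cyclo {F : Type*} [Field F] [Algebra ℚ F] (n : ℕ+)
    [IsCyclotomicExtension {(n : ℕ)} ℚ F] (hodd : Odd (n : ℕ)) {a : ℚ} (ha : a ≠ 0)
    (hirr : Irreducible (X ^ (n : ℕ) - C a)) :
    Irreducible (X ^ (n : ℕ) - C (algebraMap ℚ F a)) := by
  haveI : FiniteDimensional ℚ F := IsCyclotomicExtension.finiteDimensional {(n : ℕ)} ℚ F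
  haveI : IsGalois ℚ F := IsCyclotomicExtension.isGalois {(n : ℕ)} ℚ F
  have hζ := IsCyclotomicExtension.zeta_spec (n : ℕ) ℚ F
  have hcomm : ∀ g h : F ≃ₐ[ℚ] F, g * h = h * g := fun g h =>
    hζ.autToPow_injective ℚ (by rw [map_mul, map_mul, mul_comm])
  apply X_pow_sub_C_irreducible_of_odd hodd
  intro p hp hpn b hb
  -- p is an odd prime
  have hp2 : p ≠ 2 := by
    rintro rfl
    exact (Nat.not_even_iff_odd.mpr hodd) (even_iff_two_dvd.mpr hpn)
  have hirr_p : Irreducible (X ^ p - C a : ℚ[X]) :=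
    X_pow_sub_C_irreducible_of_prime hp
      (pow_ne_of_irreducible_X_pow_sub_C hirr hpn hp.ne_one)
  have hbint : IsIntegral ℚ b := IsIntegral.of_finite ℚ b
  have hminb : minpoly ℚ b = X ^ p - C a :=
    (minpoly.eq_of_irreducible_of_monic hirr_p
      (by rw [map_sub, map_pow, aeval_X, aeval_C, hb, sub_self])
      (monic_X_pow_sub_C a hp.ne_zero)).symm
  -- the intermediate field ℚ(b) is Galois over ℚ since Gal(F/ℚ) is abelian
  set E := IntermediateField.adjoin ℚ ({b} : Set F) with hE
  haveI hnormal : E.fixingSubgroup.Normal := by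
    constructor
    intro x hx g
    have : g * x * g⁻¹ = x := by rw [hcomm g x, mul_assoc, mul_inv_cancel, mul_one]
    rwa [this]
  haveI := IsGalois.of_fixedField_normal_subgroup E.fixingSubgroup
  have hfix : IntermediateField.fixedField E.fixingSubgroup = E :=
    IsGalois.fixedField_fixingSubgroup E
  haveI : IsGalois ℚ E := by rwa [hfix] at this
  -- the generator of E
  set x := IntermediateField.AdjoinSimple.gen ℚ b with hx
  have hminx : minpoly ℚ x = X ^ p - C a := by
    rw [← hminb]
    have := minpoly.algebraMap_eq (A := ℚ) (algebraMap E F).injective x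
    rw [IntermediateField.AdjoinSimple.algebraMap_gen] at this
    exact this.symm
  -- X^p - a splits in E, so E contains a primitive p-th root of unity
  have hsplE : Splits ((X ^ p - C a).map (algebraMap ℚ E)) := by
    rw [← hminx]
    exact Normal.splits inferInstance x
  obtain ⟨ζp, hζp⟩ := exists_primroot hp.pos ha hsplE
  -- degrees
  have hrankE : Module.finrank ℚ E = p := by
    rw [hE, IntermediateField.adjoin.finrank hbint, hminb, natDegree_X_pow_sub_C]
  exact aux_primroot_rank hp hp2 hζp hrankE

set_option maxHeartbeats 1000000 in
open IntermediateField in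
lemma finrank_eq_key {K : Type*} [Field K] [Algebra ℚ K] {m : ℕ} (hodd : Odd m) (hm2 : 2 ≤ m)
    {a : ℚ} (ha : a ≠ 0) (hirr : Irreducible (X ^ m - C a))
    [IsSplittingField ℚ K (X ^ m - C a)] {ζ : K} (hζ : IsPrimitiveRoot ζ m) :
    Module.finrank ℚ K = m.totient * m := by
  haveI : FiniteDimensional ℚ K := IsSplittingField.finiteDimensional K (X ^ m - C a)
  haveI : CharZero K := charZero_of_injective_algebraMap (algebraMap ℚ K).injective
  have hm0 : 0 < m := by omega
  set n : ℕ+ := ⟨m, hm0⟩ with hn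
  have hζn : IsPrimitiveRoot ζ (n : ℕ) := hζ
  have hζint : IsIntegral ℚ ζ := IsIntegral.of_finite ℚ ζ
  set F := ℚ⟮ζ⟯ with hF
  -- F is a cyclotomic extension of ℚ
  have Hsub := adjoin_simple_toSubalgebra_of_isAlgebraic hζint.isAlgebraic
  haveI hcyc : IsCyclotomicExtension {(n : ℕ)} ℚ F := by
    refine IsCyclotomicExtension.equiv _ _ _ (h := ?_) (.refl : F.toSubalgebra ≃ₐ[ℚ] _)
    rw [Hsub]
    exact hζn.adjoin_isCyclotomicExtension ℚ
  -- finrank of F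
  have halg : DivisionRing.toRatAlgebra = (inferInstance : Algebra ℚ K) :=
    Subsingleton.elim _ _
  have hcm := cyclotomic_eq_minpoly_rat hζ hm0
  rw [halg] at hcm
  have hrankF : Module.finrank ℚ F = m.totient := by
    rw [hF, adjoin.finrank hζint, ← hcm, natDegree_cyclotomic]
  -- K is a splitting field of X ^ m - C aF over F
  set aF : F := algebraMap ℚ F a with haF
  have hmapeq : (X ^ m - C aF).map (algebraMap F K) = (X ^ m - C a).map (algebraMap ℚ K) := by
    simp only [Polynomial.map_sub, Polynomial.map_pow, map_X, map_C, haF,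
      ← IsScalarTower.algebraMap_apply]
  have hirrF : Irreducible (X ^ m - C aF) := irreducible_cyclo n hodd ha hirr
  haveI : IsSplittingField F K (X ^ m - C aF) := by
    constructor
    · have h0 := IsSplittingField.splits K (X ^ m - C a)
      rw [hmapeq]
      exact h0
    · have hsame : (X ^ m - C aF).rootSet K = (X ^ m - C a).rootSet K := by
        rw [rootSet, rootSet, aroots_def, aroots_def, hmapeq]
      rw [hsame, eq_top_iff]
      intro x _
      have h1 := IsSplittingField.adjoin_rootSet K (X ^ m - C a)
      have hx : x ∈ Algebra.adjoin ℚ ((X ^ m - C a).rootSet K) := by rw [h1]; trivial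
      have hle : Algebra.adjoin ℚ ((X ^ m - C a).rootSet K) ≤
          Subalgebra.restrictScalars ℚ (Algebra.adjoin F ((X ^ m - C a).rootSet K)) :=
        Algebra.adjoin_le fun y hy =>
          (Subalgebra.mem_restrictScalars ℚ).mpr (Algebra.subset_adjoin hy)
      exact hle hx
  -- primitive root in F
  have hζF : IsPrimitiveRoot (⟨ζ, mem_adjoin_simple_self ℚ ζ⟩ : F) m := by
    rw [← IsPrimitiveRoot.coe_submonoidClass_iff (B := IntermediateField ℚ K)]
    exact hζ
  have primF : (primitiveRoots m F).Nonempty :=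
    ⟨_, (mem_primitiveRoots hm0).mpr hζF⟩
  have hrankFK : Module.finrank F K = m :=
    finrank_of_isSplittingField_X_pow_sub_C primF hirrF K
  rw [← Module.finrank_mul_finrank ℚ F K, hrankF, hrankFK]

lemma algEquiv_eq_one {K : Type*} [Field K] [Algebra ℚ K] {p : ℚ[X]}
    [IsSplittingField ℚ K p] {σ : K ≃ₐ[ℚ] K} (h : ∀ r ∈ p.rootSet K, σ r = r) : σ = 1 := by
  ext x
  have h1 := IsSplittingField.adjoin_rootSet K p
  have hle : Algebra.adjoin ℚ (p.rootSet K) ≤ AlgHom.equalizer σ.toAlgHom (AlgHom.id ℚ K) :=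
    Algebra.adjoin_le fun r hr => h r hr
  have hx : x ∈ Algebra.adjoin ℚ (p.rootSet K) := by rw [h1]; trivial
  exact hle hx

set_option maxHeartbeats 2000000 in
theorem stmt_7 (m : ℕ) (hm : Odd m) (hm0 : 0 < m) (a : ℚ)
    (hirr : Irreducible (X ^ m - C a))
    {K : Type*} [Field K] [Algebra ℚ K]
    (hsplit : Polynomial.IsSplittingField ℚ K (X ^ m - C a)) :
    Nonempty ((K ≃ₐ[ℚ] K) ≃* Multiplicative (ZMod m) ⋊[holMap m] (ZMod m)ˣ) := by
  haveI : IsSplittingField ℚ K (X ^ m - C a) := hsplit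
  rcases eq_or_lt_of_le (Nat.one_le_iff_ne_zero.mpr hm0.ne') with hm1 | hm2
  · -- m = 1 : both sides are trivial groups
    obtain rfl : m = 1 := hm1.symm
    haveI : Subsingleton (Multiplicative (ZMod 1) ⋊[holMap 1] (ZMod 1)ˣ) := by
      constructor
      intro x y
      ext
      · exact Subsingleton.elim _ _
      · exact Subsingleton.elim _ _
    haveI : Subsingleton (K ≃ₐ[ℚ] K) := by
      constructor
      intro σ τ
      have hσ : σ = 1 := algEquiv_eq_one (p := X ^ 1 - C a) (fun r hr => by
        rw [mem_rootSet] at hr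
        have : r = algebraMap ℚ K a := by
          have := hr.2
          simp only [map_sub, map_pow, aeval_X, aeval_C, pow_one, sub_eq_zero] at this
          exact this
        rw [this, AlgEquiv.commutes])
      have hτ : τ = 1 := algEquiv_eq_one (p := X ^ 1 - C a) (fun r hr => by
        rw [mem_rootSet] at hr
        have : r = algebraMap ℚ K a := by
          have := hr.2
          simp only [map_sub, map_pow, aeval_X, aeval_C, pow_one, sub_eq_zero] at this
          exact this
        rw [this, AlgEquiv.commutes])
      rw [hσ, hτ]
    haveI : Unique (K ≃ₐ[ℚ] K) := uniqueOfSubsingleton 1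
    haveI : Unique (Multiplicative (ZMod 1) ⋊[holMap 1] (ZMod 1)ˣ) := uniqueOfSubsingleton 1
    exact ⟨MulEquiv.ofUnique⟩
  -- now 2 ≤ m
  haveI : NeZero m := ⟨hm0.ne'⟩
  have ha : a ≠ 0 := by
    rintro rfl
    rw [map_zero, sub_zero] at hirr
    exact not_irreducible_pow (by omega : m ≠ 1) hirr
  haveI : FiniteDimensional ℚ K := IsSplittingField.finiteDimensional K (X ^ m - C a)
  have hsep : (X ^ m - C a).Separable :=
    separable_X_pow_sub_C a (Nat.cast_ne_zero.mpr hm0.ne') ha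
  haveI : IsGalois ℚ K := IsGalois.of_separable_splitting_field hsep
  obtain ⟨ζ, hζ⟩ := exists_primroot hm0 ha (IsSplittingField.splits K (X ^ m - C a))
  -- a root α of X^m - a
  set α : K := rootOfSplitsXPowSubC hm0 a K with hα_def
  have hα : α ^ m = algebraMap ℚ K a := rootOfSplitsXPowSubC_pow a K
  have hα0 : α ≠ 0 := by
    rintro h
    rw [h, zero_pow hm0.ne'] at hα
    exact ha ((_root_.map_eq_zero (algebraMap ℚ K)).mp hα.symm)
  -- the exponential map e : ZMod m → K
  set e : ZMod m → K := fun x => ζ ^ x.val with he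
  have horder : orderOf ζ = m := hζ.eq_orderOf.symm
  have e_nat : ∀ k : ℕ, ζ ^ k = e (k : ZMod m) := by
    intro k
    rw [he]
    show ζ ^ k = ζ ^ (k : ZMod m).val
    rw [ZMod.val_natCast]
    conv_lhs => rw [← Nat.div_add_mod k m]
    rw [pow_add, pow_mul, hζ.pow_eq_one, one_pow, one_mul]
  have e_inj : Function.Injective e := by
    intro x y h
    have h' : ζ ^ x.val = ζ ^ y.val := h
    exact ZMod.val_injective m (hζ.pow_inj (ZMod.val_lt x) (ZMod.val_lt y) h')
  have e_add : ∀ x y : ZMod m, e (x + y) = e x * e y := by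
    intro x y
    rw [he]
    show ζ ^ (x + y).val = ζ ^ x.val * ζ ^ y.val
    rw [← pow_add, e_nat (x.val + y.val)]
    show e _ = e _
    congr 1
    push_cast [ZMod.natCast_val, ZMod.cast_id]
    ring
  have e_zero : e 0 = 1 := by
    rw [he]; show ζ ^ (0 : ZMod m).val = 1; rw [ZMod.val_zero, pow_zero]
  -- the cyclotomic character
  set χ : (K ≃ₐ[ℚ] K) →* (ZMod m)ˣ := hζ.autToPow ℚ with hχ_def
  have hχspec : ∀ σ : K ≃ₐ[ℚ] K, σ ζ = e ((χ σ : ZMod m)) := by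
    intro σ
    rw [he]
    exact (hζ.autToPow_spec ℚ σ).symm
  have e_act : ∀ (σ : K ≃ₐ[ℚ] K) (x : ZMod m), σ (e x) = e ((χ σ : ZMod m) * x) := by
    intro σ x
    rw [he]
    show σ (ζ ^ x.val) = ζ ^ ((χ σ : ZMod m) * x).val
    rw [map_pow, ← hζ.autToPow_spec ℚ σ, ← pow_mul, e_nat]
    show e _ = e _
    congr 1
    push_cast [ZMod.natCast_val, ZMod.cast_id]
    ring
  -- representation of roots
  have hrep : ∀ r : K, r ^ m = algebraMap ℚ K a → ∃ i : ZMod m, r = e i * α := by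
    intro r hr
    have h1 : (r / α) ^ m = 1 := by
      rw [div_pow, hr, hα, div_self]
      rw [← hα]
      exact pow_ne_zero m hα0
    obtain ⟨i, -, hi⟩ := hζ.eq_pow_of_pow_eq_one h1
    refine ⟨(i : ZMod m), ?_⟩
    rw [← e_nat, hi]
    field_simp
  have hex : ∀ σ : K ≃ₐ[ℚ] K, ∃ i : ZMod m, σ α = e i * α := fun σ =>
    hrep (σ α) (by rw [← map_pow, hα, AlgEquiv.commutes])
  choose s hs using hex
  have s_unique : ∀ (σ : K ≃ₐ[ℚ] K) (i : ZMod m), σ α = e i * α → s σ = i := by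
    intro σ i hi
    apply e_inj
    have := (hs σ).symm.trans hi
    exact mul_right_cancel₀ hα0 this
  -- the homomorphism into the semidirect product
  set Φ : (K ≃ₐ[ℚ] K) →* Multiplicative (ZMod m) ⋊[holMap m] (ZMod m)ˣ :=
  { toFun := fun σ => ⟨Multiplicative.ofAdd (s σ), χ σ⟩
    map_one' := by
      have h1 : s 1 = 0 := s_unique 1 0 (by rw [e_zero, one_mul]; rfl)
      ext
      · show Multiplicative.ofAdd (s 1) = 1
        rw [h1]; rfl
      · show (χ 1 : ZMod m) = ((1 : (ZMod m)ˣ) : ZMod m)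
        rw [map_one]
    map_mul' := by
      intro σ τ
      have key : s (σ * τ) = s σ + (χ σ : ZMod m) * s τ := by
        apply s_unique
        show σ (τ α) = _
        rw [hs τ, map_mul, hs σ, e_act, ← mul_assoc, ← e_add, add_comm]
      ext
      · show Multiplicative.ofAdd (s (σ * τ)) =
          Multiplicative.ofAdd (s σ) * (holMap m (χ σ)) (Multiplicative.ofAdd (s τ))
        rw [key]
        rfl
      · show (χ (σ * τ) : ZMod m) = ((χ σ * χ τ : (ZMod m)ˣ) : ZMod m)
        rw [map_mul]
  } with hΦ_def
  -- injectivity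
  have hinj : Function.Injective Φ := by
    rw [injective_iff_map_eq_one]
    intro σ hσ
    have hl : s σ = 0 := by
      have := congrArg SemidirectProduct.left hσ
      exact this
    have hr : χ σ = 1 := by
      have := congrArg SemidirectProduct.right hσ
      exact this
    apply algEquiv_eq_one (p := X ^ m - C a)
    intro r hrr
    rw [mem_rootSet] at hrr
    have hrm : r ^ m = algebraMap ℚ K a := by
      have := hrr.2
      simp only [map_sub, map_pow, aeval_X, aeval_C, sub_eq_zero] at this
      exact this
    obtain ⟨i, rfl⟩ := hrep r hrm
    rw [map_mul, e_act, hs σ, hl, e_zero, one_mul, hr]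
    norm_num
  -- cardinalities
  haveI : Finite (Multiplicative (ZMod m) ⋊[holMap m] (ZMod m)ˣ) := by
    apply Finite.of_injective (fun x : Multiplicative (ZMod m) ⋊[holMap m] (ZMod m)ˣ =>
      (x.left, x.right))
    intro x y h
    obtain ⟨h1, h2⟩ := Prod.ext_iff.mp h
    exact SemidirectProduct.ext h1 h2
  have hcard : Nat.card (K ≃ₐ[ℚ] K) =
      Nat.card (Multiplicative (ZMod m) ⋊[holMap m] (ZMod m)ˣ) := by
    have hsdp : Nat.card (Multiplicative (ZMod m) ⋊[holMap m] (ZMod m)ˣ) =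
        m * m.totient := by
      have hequiv : (Multiplicative (ZMod m) ⋊[holMap m] (ZMod m)ˣ) ≃
          Multiplicative (ZMod m) × (ZMod m)ˣ :=
        { toFun := fun x => (x.left, x.right), invFun := fun p => ⟨p.1, p.2⟩,
          left_inv := fun x => by cases x; rfl, right_inv := fun p => rfl }
      rw [Nat.card_congr hequiv, Nat.card_prod]
      congr 1
      · rw [Nat.card_eq_fintype_card, Fintype.card_multiplicative, ZMod.card]
      · rw [Nat.card_eq_fintype_card, ZMod.card_units_eq_totient]
    have hgal : Nat.card (K ≃ₐ[ℚ] K) = Module.finrank ℚ K := by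
      rw [IsGalois.card_aut_eq_finrank]
    rw [hgal, hsdp, finrank_eq_key hm hm2 ha hirr hζ, mul_comm]
  exact ⟨MulEquiv.ofBijective Φ
    ((Nat.bijective_iff_injective_and_card Φ).mpr ⟨hinj, hcard⟩)⟩
end

section
/- For an odd prime p, the number of conjugacy classes of K(p^r) = ℤ/p^rℤ ⋊ (ℤ/p^rℤ)^× equals (p−1)p^{r−1} + (p^r − 1)/(p−1). -/
/-- The holomorph `K(m) = C(m) ⋊ G(m)` of the cyclic group of order `m`. -/
abbrev Kgrp (m : ℕ) := Multiplicative (ZMod m) ⋊[holMap m] (ZMod m)ˣ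

namespace Stmt9Aux

open AddSubgroup Multiplicative

lemma mul_mem_zmultiples {m : ℕ} [NeZero m] (x y : ZMod m) :
    x * y ∈ zmultiples x := by
  rw [mem_zmultiples_iff]
  refine ⟨(y.val : ℤ), ?_⟩
  rw [natCast_zsmul, nsmul_eq_mul, ZMod.natCast_val, ZMod.cast_id, mul_comm]

lemma zmult_mul_unit {m : ℕ} [NeZero m] (x : ZMod m) (w : (ZMod m)ˣ) :
    zmultiples (x * (w : ZMod m)) = zmultiples x := by
  apply le_antisymm
  · rw [zmultiples_le]
    exact mul_mem_zmultiples x w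
  · rw [zmultiples_le]
    have h2 := mul_mem_zmultiples (x * (w : ZMod m)) ((w⁻¹ : (ZMod m)ˣ) : ZMod m)
    rwa [mul_assoc, Units.mul_inv, mul_one] at h2

variable {p r : ℕ}

lemma exists_pow_mul_unit (hp : p.Prime) (hr : 1 ≤ r) (a : ZMod (p ^ r)) :
    ∃ (t : ℕ) (w : (ZMod (p ^ r))ˣ), t ≤ r ∧ a = (p : ZMod (p ^ r)) ^ t * (w : ZMod (p ^ r)) := by
  haveI : NeZero (p ^ r) := ⟨pow_ne_zero r hp.pos.ne'⟩
  by_cases h0 : a = 0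
  · refine ⟨r, 1, le_rfl, ?_⟩
    rw [h0, Units.val_one, mul_one, ← Nat.cast_pow, ZMod.natCast_self]
  · set v := a.val with hv
    have hvne : v ≠ 0 := by
      simpa [hv, ZMod.val_eq_zero] using h0
    set t := v.factorization p with htdef
    set s := v / p ^ t with hsdef
    have hvs : p ^ t * s = v := Nat.ordProj_mul_ordCompl_eq_self v p
    have hps : ¬ p ∣ s := Nat.not_dvd_ordCompl hp hvne
    have hcop : s.Coprime (p ^ r) :=
      Nat.Coprime.pow_right r ((Nat.coprime_comm.mp (hp.coprime_iff_not_dvd.mpr hps)))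
    refine ⟨t, ZMod.unitOfCoprime s hcop, ?_, ?_⟩
    · have h1 : p ^ t ≤ v := Nat.ordProj_le p hvne
      have h2 : v < p ^ r := ZMod.val_lt a
      have := lt_of_le_of_lt h1 h2
      exact le_of_lt ((Nat.pow_lt_pow_iff_right hp.one_lt).mp this)
    · have : a = ((v : ℕ) : ZMod (p ^ r)) := by
        rw [hv, ZMod.natCast_val, ZMod.cast_id]
      rw [this, ← hvs]
      push_cast
      rfl

lemma card_zmult_ppow (hp : p.Prime) {t : ℕ} (ht : t ≤ r) :
    Nat.card (zmultiples ((p : ZMod (p ^ r)) ^ t)) = p ^ (r - t) := by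
  have h1 : ((p : ZMod (p ^ r)) ^ t) = ((p ^ t : ℕ) : ZMod (p ^ r)) := by push_cast; rfl
  rw [h1, Nat.card_zmultiples, ZMod.addOrderOf_coe _ (pow_ne_zero r hp.pos.ne'),
    Nat.gcd_eq_right (pow_dvd_pow p ht), Nat.pow_div ht hp.pos]

lemma zmult_ppow_inj (hp : p.Prime) {t t' : ℕ} (ht : t ≤ r) (ht' : t' ≤ r)
    (h : zmultiples ((p : ZMod (p ^ r)) ^ t) = zmultiples ((p : ZMod (p ^ r)) ^ t')) :
    t = t' := by
  have hc : p ^ (r - t) = p ^ (r - t') := by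
    rw [← card_zmult_ppow hp ht, ← card_zmult_ppow hp ht', h]
  have := Nat.pow_right_injective hp.two_le hc
  omega

lemma ppow_mem {m : ℕ} [NeZero m] {t k : ℕ} (h : t ≤ k) :
    (p : ZMod m) ^ k ∈ zmultiples ((p : ZMod m) ^ t) := by
  have : (p : ZMod m) ^ k = (p : ZMod m) ^ t * (p : ZMod m) ^ (k - t) := by
    rw [← pow_add]; congr 1; omega
  exact this ▸ mul_mem_zmultiples _ _

lemma sup_ppow {m : ℕ} [NeZero m] (t k : ℕ) :
    zmultiples ((p : ZMod m) ^ t) ⊔ zmultiples ((p : ZMod m) ^ k)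
      = zmultiples ((p : ZMod m) ^ (min t k)) := by
  rcases le_total t k with h | h
  · rw [min_eq_left h, sup_eq_left, zmultiples_le]
    exact ppow_mem h
  · rw [min_eq_right h, sup_eq_right, zmultiples_le]
    exact ppow_mem h

lemma conj_sup {m : ℕ} [NeZero m] (v : (ZMod m)ˣ) (a c b : ZMod m) :
    zmultiples ((v : ZMod m) * a + c * b) ⊔ zmultiples c = zmultiples a ⊔ zmultiples c := by
  apply le_antisymm
  · refine sup_le ?_ le_sup_right
    rw [zmultiples_le]
    refine add_mem (mem_sup_left ?_) (mem_sup_right (mul_mem_zmultiples c b))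
    have h2 := mul_mem_zmultiples a ((v : ZMod m))
    rwa [mul_comm] at h2
  · refine sup_le ?_ le_sup_right
    rw [zmultiples_le]
    have ha : a = ((v : ZMod m) * a + c * b) * ((v⁻¹ : (ZMod m)ˣ) : ZMod m)
        + c * (-(((v⁻¹ : (ZMod m)ˣ) : ZMod m)) * b) := by
      have h := v.inv_mul
      linear_combination (-a) * h
    have mem1 : ((v : ZMod m) * a + c * b) * ((v⁻¹ : (ZMod m)ˣ) : ZMod m)
        + c * (-(((v⁻¹ : (ZMod m)ˣ) : ZMod m)) * b)
        ∈ zmultiples ((v : ZMod m) * a + c * b) ⊔ zmultiples c :=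
      add_mem (mem_sup_left (mul_mem_zmultiples _ _)) (mem_sup_right (mul_mem_zmultiples _ _))
    rwa [← ha] at mem1

lemma mul_mem_of_mem {m : ℕ} [NeZero m] {H : AddSubgroup (ZMod m)} {x : ZMod m}
    (hx : x ∈ H) (y : ZMod m) : x * y ∈ H := by
  have hxy : x * y = y.val • x := by
    rw [nsmul_eq_mul, ZMod.natCast_val, ZMod.cast_id, mul_comm]
  rw [hxy]
  exact nsmul_mem hx y.val

lemma complete (hp : p.Prime) (hr : 1 ≤ r) {a a' c : ZMod (p ^ r)}
    (h : zmultiples a ⊔ zmultiples c = zmultiples a' ⊔ zmultiples c) :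
    ∃ (v : (ZMod (p ^ r))ˣ) (b : ZMod (p ^ r)),
      a' = (v : ZMod (p ^ r)) * a + c * b := by
  haveI : NeZero (p ^ r) := ⟨pow_ne_zero r hp.pos.ne'⟩
  obtain ⟨t, w, ht, ha⟩ := exists_pow_mul_unit hp hr a
  obtain ⟨t', w', ht', ha'⟩ := exists_pow_mul_unit hp hr a'
  obtain ⟨k, z, hk, hc⟩ := exists_pow_mul_unit hp hr c
  rw [ha, ha', hc, zmult_mul_unit, zmult_mul_unit, zmult_mul_unit, sup_ppow, sup_ppow] at h
  have hmin : min t k = min t' k :=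
    zmult_ppow_inj hp (by omega) (by omega) h
  by_cases hcase : k ≤ t
  · have hk' : k ≤ t' := by omega
    have hmem : ∀ {s : ℕ} (ws : (ZMod (p ^ r))ˣ), k ≤ s →
        (p : ZMod (p ^ r)) ^ s * (ws : ZMod (p ^ r)) ∈ zmultiples c := by
      intro s ws hs
      have h1 : (p : ZMod (p ^ r)) ^ s ∈ zmultiples c := by
        rw [hc, zmult_mul_unit]; exact ppow_mem hs
      exact mul_mem_of_mem h1 _
    obtain ⟨n, hn⟩ := mem_zmultiples_iff.mp (ha ▸ hmem w hcase)
    obtain ⟨n', hn'⟩ := mem_zmultiples_iff.mp (ha' ▸ hmem w' hk')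
    refine ⟨1, ((n' - n : ℤ) : ZMod (p ^ r)), ?_⟩
    rw [← hn, ← hn', zsmul_eq_mul, zsmul_eq_mul]
    push_cast
    ring
  · have htt : t' = t := by omega
    refine ⟨w' * w⁻¹, 0, ?_⟩
    rw [ha, ha', htt, Units.val_mul]
    have hw := w.inv_mul
    linear_combination (-((p : ZMod (p ^ r)) ^ t * (w' : ZMod (p ^ r)))) * hw

lemma holMap_apply {m : ℕ} (u : (ZMod m)ˣ) (a : Multiplicative (ZMod m)) :
    holMap m u a = ofAdd ((u : ZMod m) * toAdd a) := rfl

lemma conj_eq {m : ℕ} (c x : Kgrp m) :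
    c * x * c⁻¹ = ⟨ofAdd ((c.right : ZMod m) * toAdd x.left
      + (1 - (x.right : ZMod m)) * toAdd c.left), x.right⟩ := by
  refine SemidirectProduct.ext ?_ ?_
  · refine Multiplicative.toAdd.injective ?_
    simp only [SemidirectProduct.mul_left, SemidirectProduct.inv_left,
      SemidirectProduct.mul_right, holMap_apply, toAdd_mul, toAdd_ofAdd, toAdd_inv,
      Units.val_mul]
    have h : ((c.right : ZMod m)) * ((c.right⁻¹ : (ZMod m)ˣ) : ZMod m) = 1 := c.right.mul_inv
    linear_combination (-((x.right : ZMod m) * toAdd c.left)) * h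
  · simp only [SemidirectProduct.mul_right, SemidirectProduct.inv_right]
    rw [mul_comm c.right x.right, mul_assoc, mul_inv_cancel, mul_one]

lemma isConj_iff'' {m : ℕ} (x y : Kgrp m) :
    IsConj x y ↔ (y.right = x.right ∧ ∃ (v : (ZMod m)ˣ) (b : ZMod m),
      toAdd y.left = (v : ZMod m) * toAdd x.left + (1 - (x.right : ZMod m)) * b) := by
  rw [isConj_iff]
  constructor
  · rintro ⟨c, hc⟩
    rw [conj_eq] at hc
    refine ⟨by rw [← hc], c.right, toAdd c.left, by rw [← hc]; simp⟩
  · rintro ⟨h1, v, b, h2⟩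
    refine ⟨⟨ofAdd b, v⟩, ?_⟩
    rw [conj_eq]
    refine SemidirectProduct.ext ?_ h1.symm
    refine Multiplicative.toAdd.injective ?_
    simp [h2]

lemma isUnit_one_sub (hp : p.Prime) (hr : 1 ≤ r) {s : ℕ} (hs : 1 ≤ s) {x : ZMod (p ^ r)}
    (hx : x ∈ zmultiples ((p : ZMod (p ^ r)) ^ s)) : IsUnit (1 - x) := by
  haveI : NeZero (p ^ r) := ⟨pow_ne_zero r hp.pos.ne'⟩
  haveI : Fact (1 < p) := ⟨hp.one_lt⟩
  obtain ⟨n, hn⟩ := mem_zmultiples_iff.mp hx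
  have key : ¬ (p : ℕ) ∣ (1 - x).val := by
    intro hdvd
    have h1 : ((p : ℕ) : ZMod (p ^ r)) ∣ (1 - x) := by
      have hv : (((1 - x).val : ℕ) : ZMod (p ^ r)) = 1 - x := by
        rw [ZMod.natCast_val, ZMod.cast_id]
      rw [← hv]
      exact_mod_cast Nat.cast_dvd_cast (α := ZMod (p ^ r)) hdvd
    have h2 : ((p : ℕ) : ZMod (p ^ r)) ∣ x := by
      rw [← hn, zsmul_eq_mul]
      exact Dvd.dvd.mul_left ((dvd_pow_self (p : ZMod (p ^ r)) (by omega))) _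
    have h3 : ((p : ℕ) : ZMod (p ^ r)) ∣ 1 := by
      have := dvd_add h1 h2
      simpa using this
    have h4 : IsUnit ((p : ℕ) : ZMod (p ^ r)) := isUnit_of_dvd_one h3
    have h5 := h4.map (ZMod.castHom (dvd_pow_self p (by omega : r ≠ 0)) (ZMod p))
    rw [map_natCast, ZMod.natCast_self] at h5
    exact not_isUnit_zero h5
  have hcop : ((1 - x).val).Coprime (p ^ r) :=
    Nat.Coprime.pow_right r (Nat.coprime_comm.mp (hp.coprime_iff_not_dvd.mpr key))
  have := (ZMod.isUnit_iff_coprime (1 - x).val (p ^ r)).mpr hcop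
  rwa [ZMod.natCast_val, ZMod.cast_id] at this

lemma geom_aux (hp : p.Prime) :
    p ^ r - 1 = (∑ j ∈ Finset.range r, p ^ j) * (p - 1) := by
  have hz : ((p : ℤ) ^ r - 1) = (∑ j ∈ Finset.range r, (p : ℤ) ^ j) * ((p : ℤ) - 1) :=
    (geom_sum_mul _ _).symm
  have hp1 : 1 ≤ p ^ r := Nat.one_le_pow _ _ hp.pos
  have hcast : ((p ^ r - 1 : ℕ) : ℤ) = (((∑ j ∈ Finset.range r, p ^ j) * (p - 1) : ℕ) : ℤ) := by
    push_cast [hp1, hp.one_le]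
    linarith [hz]
  exact_mod_cast hcast

def finv (m : ℕ) (g : Kgrp m) : (ZMod m)ˣ × AddSubgroup (ZMod m) :=
  (g.right, zmultiples (toAdd g.left) ⊔ zmultiples (1 - (g.right : ZMod m)))

lemma finv_conj {m : ℕ} [NeZero m] {x y : Kgrp m} (hxy : IsConj x y) :
    finv m x = finv m y := by
  obtain ⟨h1, v, b, h2⟩ := (isConj_iff'' x y).mp hxy
  unfold finv
  rw [h1, h2]
  exact Prod.ext rfl (conj_sup v (toAdd x.left) (1 - (x.right : ZMod m)) b).symm

lemma finv_complete (hp : p.Prime) (hr : 1 ≤ r) {x y : Kgrp (p ^ r)}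
    (hf : finv (p ^ r) x = finv (p ^ r) y) : IsConj x y := by
  haveI : NeZero (p ^ r) := ⟨pow_ne_zero r hp.pos.ne'⟩
  have h1 : y.right = x.right := (congrArg Prod.fst hf).symm
  have h2 : zmultiples (toAdd x.left) ⊔ zmultiples (1 - (x.right : ZMod (p ^ r)))
      = zmultiples (toAdd y.left) ⊔ zmultiples (1 - (x.right : ZMod (p ^ r))) := by
    have h3 := congrArg Prod.snd hf
    unfold finv at h3
    rw [h1] at h3
    exact h3
  obtain ⟨v, b, hb⟩ := complete hp hr h2
  exact (isConj_iff'' x y).mpr ⟨h1, v, b, hb⟩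

end Stmt9Aux

set_option maxHeartbeats 2000000 in
open AddSubgroup Multiplicative Stmt9Aux in
theorem stmt_9 (p r : ℕ) (hp : p.Prime) (hodd : Odd p) (hr : 1 ≤ r) :
    Nat.card (ConjClasses (Kgrp (p ^ r))) =
      (p - 1) * p ^ (r - 1) + (p ^ r - 1) / (p - 1) := by
  classical
  haveI : Fact p.Prime := ⟨hp⟩
  haveI : NeZero (p ^ r) := ⟨pow_ne_zero r hp.pos.ne'⟩
  have hconst : ∀ x y : Kgrp (p ^ r), IsConj x y → finv (p ^ r) x = finv (p ^ r) y :=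
    fun x y hxy => finv_conj hxy
  have hcompl : ∀ x y : Kgrp (p ^ r), finv (p ^ r) x = finv (p ^ r) y → IsConj x y :=
    fun x y hf => finv_complete hp hr hf
  let F : ConjClasses (Kgrp (p ^ r)) → (ZMod (p ^ r))ˣ × AddSubgroup (ZMod (p ^ r)) :=
    Quotient.lift (finv (p ^ r)) hconst
  have hFinj : Function.Injective F := by
    intro cx cy h
    obtain ⟨x, rfl⟩ := Quotient.exists_rep cx
    obtain ⟨y, rfl⟩ := Quotient.exists_rep cy
    exact Quotient.sound (hcompl x y h)
  have hcard1 : Nat.card (ConjClasses (Kgrp (p ^ r))) = Nat.card (Set.range F) :=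
    (Nat.card_range_of_injective hFinj).symm
  have hrange : Set.range F = Set.range (finv (p ^ r)) := by
    ext s
    constructor
    · rintro ⟨cx, rfl⟩
      obtain ⟨x, rfl⟩ := Quotient.exists_rep cx
      exact ⟨x, rfl⟩
    · rintro ⟨x, rfl⟩
      exact ⟨Quotient.mk _ x, rfl⟩
  choose kk zz hkk hzz using
    fun u : (ZMod (p ^ r))ˣ => exists_pow_mul_unit hp hr (1 - (u : ZMod (p ^ r)))
  let T : Finset ((ZMod (p ^ r))ˣ × AddSubgroup (ZMod (p ^ r))) :=
    Finset.univ.biUnion (fun u => (Finset.range (kk u + 1)).image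
      (fun j => (u, zmultiples ((p : ZMod (p ^ r)) ^ j))))
  have hrf : Set.range (finv (p ^ r)) = ↑T := by
    ext s
    simp only [Set.mem_range, Finset.coe_biUnion, Finset.mem_coe, Finset.mem_univ,
      Set.iUnion_true, Set.mem_iUnion, Finset.mem_image, Finset.mem_range, T]
    constructor
    · rintro ⟨g, rfl⟩
      obtain ⟨t, w, ht, haw⟩ := exists_pow_mul_unit hp hr (toAdd g.left)
      have hfg : finv (p ^ r) g = (g.right, zmultiples ((p : ZMod (p ^ r)) ^ (min t (kk g.right)))) := by
        unfold finv
        rw [haw, hzz g.right, zmult_mul_unit, zmult_mul_unit, sup_ppow]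
      rw [hfg]
      exact ⟨g.right, min t (kk g.right), by omega, rfl⟩
    · rintro ⟨u, j, hj, rfl⟩
      refine ⟨⟨ofAdd ((p : ZMod (p ^ r)) ^ j), u⟩, ?_⟩
      unfold finv
      rw [show toAdd (ofAdd ((p : ZMod (p ^ r)) ^ j)) = (p : ZMod (p ^ r)) ^ j from rfl,
        hzz u, zmult_mul_unit, sup_ppow, min_eq_left (by omega)]
  have hTcard : T.card = ∑ u : (ZMod (p ^ r))ˣ, (kk u + 1) := by
    rw [Finset.card_biUnion]
    · refine Finset.sum_congr rfl ?_
      intro u _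
      rw [Finset.card_image_of_injOn, Finset.card_range]
      intro j hj j' hj' hjj
      simp only [Finset.coe_range, Set.mem_Iio] at hj hj'
      have hsnd := (Prod.ext_iff.mp hjj).2
      exact zmult_ppow_inj hp (by have := hkk u; omega) (by have := hkk u; omega) hsnd
    · intro u _ u' _ huu
      rw [Function.onFun, Finset.disjoint_left]
      rintro s hs hs'
      simp only [Finset.mem_image] at hs hs'
      obtain ⟨j, _, rfl⟩ := hs
      obtain ⟨j', _, hj'⟩ := hs'
      exact huu ((Prod.ext_iff.mp hj').1).symm
  have hfiber : ∀ j, j < r →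
      (Finset.univ.filter (fun u : (ZMod (p ^ r))ˣ => j < kk u)).card = p ^ (r - 1 - j) := by
    intro j hj
    have hchar : ∀ u : (ZMod (p ^ r))ˣ,
        (j < kk u ↔ (1 - (u : ZMod (p ^ r))) ∈ zmultiples ((p : ZMod (p ^ r)) ^ (j + 1))) := by
      intro u
      constructor
      · intro hlt
        rw [hzz u]
        refine mul_mem_of_mem ?_ _
        rw [← zmultiples_le, ← (zmult_mul_unit ((p : ZMod (p ^ r)) ^ (kk u)) (zz u))]
        rw [zmultiples_le]
        exact mul_mem_of_mem (ppow_mem (by omega)) _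
      · intro hmem
        by_contra hge
        push_neg at hge
        have h1 : zmultiples (1 - (u : ZMod (p ^ r))) ≤ zmultiples ((p : ZMod (p ^ r)) ^ (j + 1)) :=
          zmultiples_le.mpr hmem
        have h2 : (p : ℕ) ^ (r - kk u) ∣ p ^ (r - (j + 1)) := by
          have h3 := card_dvd_of_le h1
          rwa [hzz u, zmult_mul_unit, card_zmult_ppow hp (hkk u),
            card_zmult_ppow hp (by omega)] at h3
        rw [Nat.pow_dvd_pow_iff_le_right hp.one_lt] at h2
        have := hkk u
        omega
    have e : {u : (ZMod (p ^ r))ˣ // (1 - (u : ZMod (p ^ r))) ∈ zmultiples ((p : ZMod (p ^ r)) ^ (j + 1))}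
        ≃ zmultiples ((p : ZMod (p ^ r)) ^ (j + 1)) :=
      { toFun := fun u => ⟨1 - (u.1 : ZMod (p ^ r)), u.2⟩
        invFun := fun x => ⟨(isUnit_one_sub hp hr (by omega) x.2).unit, by
          rw [IsUnit.unit_spec, sub_sub_cancel]; exact x.2⟩
        left_inv := fun u => by
          apply Subtype.ext
          apply Units.ext
          rw [IsUnit.unit_spec, sub_sub_cancel]
        right_inv := fun x => by
          apply Subtype.ext
          simp only [IsUnit.unit_spec, sub_sub_cancel] }
    calc (Finset.univ.filter (fun u : (ZMod (p ^ r))ˣ => j < kk u)).card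
        = (Finset.univ.filter (fun u : (ZMod (p ^ r))ˣ =>
            (1 - (u : ZMod (p ^ r))) ∈ zmultiples ((p : ZMod (p ^ r)) ^ (j + 1)))).card := by
          congr 1
          exact Finset.filter_congr (fun u _ => by rw [hchar u])
      _ = Fintype.card {u : (ZMod (p ^ r))ˣ //
            (1 - (u : ZMod (p ^ r))) ∈ zmultiples ((p : ZMod (p ^ r)) ^ (j + 1))} :=
          (Fintype.card_subtype _).symm
      _ = Nat.card {u : (ZMod (p ^ r))ˣ //
            (1 - (u : ZMod (p ^ r))) ∈ zmultiples ((p : ZMod (p ^ r)) ^ (j + 1))} :=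
          (Nat.card_eq_fintype_card).symm
      _ = Nat.card (zmultiples ((p : ZMod (p ^ r)) ^ (j + 1))) := Nat.card_congr e
      _ = p ^ (r - (j + 1)) := card_zmult_ppow hp (by omega)
      _ = p ^ (r - 1 - j) := by congr 1; omega
  have hsum2 : (∑ u : (ZMod (p ^ r))ˣ, kk u) = ∑ j ∈ Finset.range r, p ^ (r - 1 - j) := by
    have h1 : ∀ u : (ZMod (p ^ r))ˣ, kk u = ∑ j ∈ Finset.range r, if j < kk u then 1 else 0 := by
      intro u
      rw [← Finset.card_filter]
      have h2 : (Finset.range r).filter (fun j => j < kk u) = Finset.range (kk u) := by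
        ext j
        simp only [Finset.mem_filter, Finset.mem_range]
        have := hkk u
        omega
      rw [h2, Finset.card_range]
    calc (∑ u : (ZMod (p ^ r))ˣ, kk u)
        = ∑ u : (ZMod (p ^ r))ˣ, ∑ j ∈ Finset.range r, if j < kk u then 1 else 0 :=
          Finset.sum_congr rfl (fun u _ => h1 u)
      _ = ∑ j ∈ Finset.range r, ∑ u : (ZMod (p ^ r))ˣ, if j < kk u then 1 else 0 :=
          Finset.sum_comm
      _ = ∑ j ∈ Finset.range r, p ^ (r - 1 - j) := by
          refine Finset.sum_congr rfl ?_
          intro j hj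
          rw [← Finset.card_filter]
          exact hfiber j (Finset.mem_range.mp hj)
  have hsum3 : ∑ j ∈ Finset.range r, p ^ (r - 1 - j) = (p ^ r - 1) / (p - 1) := by
    rw [Finset.sum_range_reflect (fun i => p ^ i) r]
    exact (Nat.div_eq_of_eq_mul_left (by have := hp.two_le; omega) (geom_aux hp)).symm
  have htot : ∑ u : (ZMod (p ^ r))ˣ, (kk u + 1)
      = (p ^ r - 1) / (p - 1) + (p - 1) * p ^ (r - 1) := by
    rw [Finset.sum_add_distrib, Finset.sum_const, smul_eq_mul, mul_one, hsum2, hsum3,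
      Finset.card_univ]
    congr 1
    rw [ZMod.card_units_eq_totient, Nat.totient_prime_pow hp (by omega), mul_comm]
  rw [hcard1, hrange, hrf, Nat.card_coe_set_eq, Set.ncard_coe_finset, hTcard, htot,
    add_comm]
end

section
/- Let K be a number field, a ∈ O_K, n ≥ 1, and L = K(a^{1/n}). If a prime ideal 𝔭 of O_K does not divide (na), then 𝔭 is unramified in L. -/
open NumberField IntermediateField

open Polynomial

theorem stmt_12 {K L : Type*} [Field K] [NumberField K] [Field L] [NumberField L]
    [Algebra K L] (n : ℕ) (hn : 1 ≤ n) (a : 𝓞 K) (ha : a ≠ 0)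
    (α : L) (hα : α ^ n = algebraMap K L (a : K))
    (hgen : IntermediateField.adjoin K ({α} : Set L) = ⊤)
    (𝔭 : Ideal (𝓞 K)) [𝔭.IsPrime] (hbot : 𝔭 ≠ ⊥)
    (hnd : (n : 𝓞 K) * a ∉ 𝔭)
    (P : Ideal (𝓞 L)) [P.IsPrime]
    (hP : Ideal.comap (algebraMap (𝓞 K) (𝓞 L)) P = 𝔭) :
    Ideal.ramificationIdx' 𝔭 P = 1 := by

  -- α is an algebraic integer
  have hαn : IsIntegral ℤ (α ^ n) := by
    rw [hα]; exact IsIntegral.map (IsScalarTower.toAlgHom ℤ K L) a.2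
  have hαint : IsIntegral ℤ α := hαn.of_pow (by omega)
  set β : 𝓞 L := ⟨α, hαint⟩ with hβdef
  have hβpow : β ^ n = algebraMap (𝓞 K) (𝓞 L) a := by
    ext
    push_cast [hβdef]
    exact hα.trans rfl
  -- adjoin condition
  have hadj : Algebra.adjoin K {algebraMap (𝓞 L) L β} = ⊤ := by
    have hint : IsIntegral K α := hαint.tower_top
    have h := IntermediateField.adjoin_simple_toSubalgebra_of_isAlgebraic hint.isAlgebraic
    rw [hgen] at h
    have : (algebraMap (𝓞 L) L) β = α := rfl
    rw [this]
    exact h.symm.trans rfl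
  have hβi : IsIntegral (𝓞 K) β := IsIntegralClosure.isIntegral ℤ L β |>.tower_top
  -- minpoly divides X^n - C a
  have heval : Polynomial.aeval β ((X : (𝓞 K)[X]) ^ n - C a) = 0 := by
    simp [hβpow]
  obtain ⟨g, hg⟩ := minpoly.isIntegrallyClosed_dvd hβi heval
  -- the key derivative computation
  have hmem : aeval β (derivative (minpoly (𝓞 K) β)) ∈ differentIdeal (𝓞 K) (𝓞 L) :=
    aeval_derivative_mem_differentIdeal (𝓞 K) K L β hadj
  have hnle : ¬ differentIdeal (𝓞 K) (𝓞 L) ≤ P := by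
    intro hle
    have h1 : aeval β (derivative ((X : (𝓞 K)[X]) ^ n - C a)) ∈ P := by
      rw [hg, derivative_mul, map_add, map_mul, map_mul, minpoly.aeval, zero_mul, add_zero]
      exact P.mul_mem_right _ (hle hmem)
    have h2 : (n : 𝓞 L) * β ^ (n - 1) ∈ P := by
      simpa [derivative_X_pow] using h1
    have h3 : algebraMap (𝓞 K) (𝓞 L) ((n : 𝓞 K) * a) ∈ P := by
      have := P.mul_mem_right β h2
      rw [mul_assoc, ← pow_succ, Nat.sub_add_cancel hn, hβpow] at this
      rw [map_mul]
      convert this using 2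
      push_cast
      rfl
    exact hnd (by rw [← hP]; exact h3)
  -- ramification index
  have hle : Ideal.map (algebraMap (𝓞 K) (𝓞 L)) 𝔭 ≤ P :=
    Ideal.map_le_iff_le_comap.mpr (le_of_eq hP.symm)
  have hmapne : Ideal.map (algebraMap (𝓞 K) (𝓞 L)) 𝔭 ≠ ⊥ := fun h =>
    hbot ((Ideal.map_eq_bot_iff_of_injective
      (FaithfulSMul.algebraMap_injective (𝓞 K) (𝓞 L))).mp h)
  have hne : Ideal.ramificationIdx' 𝔭 P ≠ 0 :=
    Ideal.IsDedekindDomain.ramificationIdx_ne_zero hmapne inferInstance hle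
  have : 𝔭.IsMaximal := Ideal.IsPrime.isMaximal inferInstance hbot
  have hdvd : P ^ (Ideal.ramificationIdx' 𝔭 P) ∣
      Ideal.map (algebraMap (𝓞 K) (𝓞 L)) 𝔭 :=
    Ideal.dvd_iff_le.mpr Ideal.le_pow_ramificationIdx
  have hdiff := pow_sub_one_dvd_differentIdeal (𝓞 K) P _ hbot hdvd
  by_contra hne1
  have h2le : 2 ≤ Ideal.ramificationIdx' 𝔭 P := by omega
  have : P ∣ differentIdeal (𝓞 K) (𝓞 L) :=
    dvd_trans (dvd_pow_self P (by omega)) hdiff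
  exact hnle (Ideal.le_of_dvd this)
end

section
/- Let p be a prime and a ∈ ℤ_p with p ∤ a. Then a is a p^r-th power in ℚ_p if and only if p^{r+1} divides a^{p−1} − 1. Moreover, for 0 < s ≤ r, a ∈ ℚ_p^{p^{r−s}} \ ℚ_p^{p^{r−s+1}} if and only if v_p(a^{p−1} − 1) = r − s + 1. -/
variable {p : ℕ} [Fact p.Prime]

-- L0
lemma myDvdIffToZMod (x : ℤ_[p]) : (p : ℤ_[p]) ∣ x ↔ PadicInt.toZMod x = 0 := by
  rw [← RingHom.mem_ker, PadicInt.ker_toZMod, PadicInt.maximalIdeal_eq_span_p,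
    Ideal.mem_span_singleton]

-- unit criterion
lemma myUnit (x : ℤ_[p]) (hx : PadicInt.toZMod x ≠ 0) : IsUnit x := by
  by_contra h
  exact hx ((myDvdIffToZMod x).1 ((PadicInt.norm_lt_one_iff_dvd x).1
    (PadicInt.mem_nonunits.1 h)))

-- L1: binomial expansion
lemma myBinom (hodd : Odd p) (x : ℤ_[p]) (hx : (p : ℤ_[p]) ∣ x) :
    ∃ m : ℤ_[p], (1 + x) ^ p - 1 = x * p * (1 + p * m) := by
  have hp := Fact.out (p := p.Prime)
  have hp3 : 3 ≤ p := by
    have h2 := hp.two_le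
    rcases Nat.lt_or_ge p 3 with h | h
    · interval_cases p
      · exact absurd hodd (by decide)
    · exact h
  have key : ∀ i ∈ Finset.range (p - 1),
      x * (p : ℤ_[p]) ^ 2 ∣ x ^ (i + 2) * (p.choose (i + 2) : ℤ_[p]) := by
    intro i hi
    have h1 : x ^ (i + 2) * (p.choose (i + 2) : ℤ_[p])
        = x * (x ^ (i + 1) * (p.choose (i + 2) : ℤ_[p])) := by ring
    rw [h1]
    apply mul_dvd_mul_left x
    rcases Nat.eq_zero_or_pos i with h0 | h0
    · subst h0
      have hC : (p : ℤ_[p]) ∣ (p.choose 2 : ℤ_[p]) := by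
        exact_mod_cast Nat.cast_dvd_cast (α := ℤ_[p])
          (hp.dvd_choose_self (by norm_num) (by omega))
      calc (p : ℤ_[p]) ^ 2 = p * p := sq (p : ℤ_[p])
        _ ∣ x ^ (0 + 1) * (p.choose (0 + 2) : ℤ_[p]) := by
            rw [pow_one]; exact mul_dvd_mul hx hC
    · apply dvd_mul_of_dvd_left
      calc (p : ℤ_[p]) ^ 2 ∣ x ^ 2 := pow_dvd_pow_of_dvd hx 2
        _ ∣ x ^ (i + 1) := pow_dvd_pow x (by omega)
  obtain ⟨m, hm⟩ := (Finset.dvd_sum key)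
  refine ⟨m, ?_⟩
  have expand : (1 + x) ^ p
      = ∑ k ∈ Finset.range (p + 1), x ^ k * 1 ^ (p - k) * (p.choose k : ℤ_[p]) := by
    rw [add_comm]; exact add_pow x 1 p
  have hsplit : ∑ k ∈ Finset.range (p + 1), x ^ k * 1 ^ (p - k) * (p.choose k : ℤ_[p])
      = (∑ i ∈ Finset.range (p - 1), x ^ (i + 2) * (p.choose (i + 2) : ℤ_[p]))
        + x * p + 1 := by
    have hp1 : p + 1 = (p - 1) + 1 + 1 := by omega
    rw [hp1, Finset.sum_range_succ', Finset.sum_range_succ']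
    simp [Nat.choose_one_right, hp1.symm]
  rw [expand, hsplit, hm]
  ring

-- Fermat: any z with z^p ≡ 1 mod p satisfies z ≡ 1 mod p
lemma myFermat (z : ℤ_[p]) (hz : (p : ℤ_[p]) ∣ z ^ p - 1) : (p : ℤ_[p]) ∣ z - 1 := by
  rw [myDvdIffToZMod] at hz ⊢
  have h1 : PadicInt.toZMod (z ^ p - 1) = (PadicInt.toZMod z) ^ p - 1 := by
    push_cast [map_sub, map_pow, map_one]; ring
  rw [h1, sub_eq_zero] at hz
  rw [map_sub, map_one, sub_eq_zero, ← ZMod.pow_card (PadicInt.toZMod z), hz]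

-- one-step factorization
lemma myStep (hodd : Odd p) (e : ℤ_[p]) (he : (p : ℤ_[p]) ∣ e - 1) :
    ∃ u : ℤ_[p], IsUnit u ∧ e ^ p - 1 = (e - 1) * p * u := by
  obtain ⟨m, hm⟩ := myBinom hodd (e - 1) he
  refine ⟨1 + p * m, myUnit _ ?_, ?_⟩
  · obtain ⟨w, hw⟩ : ∃ w, (p : ℤ_[p]) * m = p * w := ⟨m, rfl⟩
    have : PadicInt.toZMod (1 + (p : ℤ_[p]) * m) = 1 := by
      have hz : PadicInt.toZMod ((p : ℤ_[p]) * m) = 0 :=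
        (myDvdIffToZMod _).1 ⟨m, rfl⟩
      rw [map_add, map_one, hz, add_zero]
    rw [this]; exact one_ne_zero
  · have : e = 1 + (e - 1) := by ring
    rw [this] at hm ⊢
    simpa using hm

-- existence of p-th roots via Hensel
lemma myRoot (hodd : Odd p) (c : ℤ_[p]) (hc : (p : ℤ_[p]) ^ 2 ∣ c - 1) :
    ∃ e : ℤ_[p], e ^ p = c ∧ (p : ℤ_[p]) ∣ e - 1 := by
  have hp := Fact.out (p := p.Prime)
  obtain ⟨w, hw⟩ := hc
  obtain ⟨m, hm⟩ := myBinom hodd ((p : ℤ_[p]) * w) ⟨w, rfl⟩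
  set a : ℤ_[p] := 1 + p * w with ha
  have haval : a ^ p - c = (p : ℤ_[p]) ^ 3 * (w * m) := by
    have h1 : a ^ p - c = (a ^ p - 1) - (c - 1) := by ring
    rw [h1, hm, hw]; ring
  set F : Polynomial ℤ_[p] := Polynomial.X ^ p - Polynomial.C c with hF
  have hFa : F.eval a = a ^ p - c := by simp [hF]
  have hF' : F.derivative.eval a = (p : ℤ_[p]) * a ^ (p - 1) := by
    simp [hF, Polynomial.derivative_X_pow]
  have haunit : ‖a‖ = 1 := by
    rw [← PadicInt.isUnit_iff]
    apply myUnit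
    have hz : PadicInt.toZMod ((p : ℤ_[p]) * w) = 0 := (myDvdIffToZMod _).1 ⟨w, rfl⟩
    rw [ha, map_add, map_one, hz, add_zero]; exact one_ne_zero
  have hplt : (1 : ℝ) < p := by exact_mod_cast hp.one_lt
  have hnorm : ‖F.eval a‖ < ‖F.derivative.eval a‖ ^ 2 := by
    rw [hFa, hF', haval]
    have h1 : ‖(p : ℤ_[p]) * a ^ (p - 1)‖ = (p : ℝ)⁻¹ := by
      rw [norm_mul, PadicInt.norm_p, norm_pow, haunit, one_pow, mul_one]
    rw [h1, norm_mul]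
    have h2 : ‖(p : ℤ_[p]) ^ 3‖ = ((p : ℝ)⁻¹) ^ 3 := by
      rw [norm_pow, PadicInt.norm_p]
    rw [h2]
    have h3 : ‖w * m‖ ≤ 1 := PadicInt.norm_le_one _
    have hpos : (0 : ℝ) < (p : ℝ)⁻¹ := by positivity
    calc ((p:ℝ)⁻¹) ^ 3 * ‖w * m‖ ≤ ((p:ℝ)⁻¹) ^ 3 * 1 := by
          exact mul_le_mul_of_nonneg_left h3 (by positivity)
      _ = ((p:ℝ)⁻¹) ^ 3 := mul_one _
      _ < ((p:ℝ)⁻¹) ^ 2 := by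
          apply pow_lt_pow_right_of_lt_one₀ hpos ?_ (by omega)
          rw [inv_lt_one_iff₀]; right; exact hplt
  obtain ⟨z, hz, -⟩ := hensels_lemma hnorm
  have hzc : z ^ p = c := by
    have : Polynomial.eval z F = z ^ p - c := by simp [hF]
    rw [Polynomial.coe_aeval_eq_eval, this, sub_eq_zero] at hz
    exact hz
  refine ⟨z, hzc, myFermat z ?_⟩
  rw [hzc, hw]
  exact dvd_mul_of_dvd_left (dvd_pow_self _ two_ne_zero) w

-- main induction
lemma myMain (hodd : Odd p) : ∀ (m : ℕ) (c : ℤ_[p]), (p : ℤ_[p]) ∣ c - 1 →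
    ((∃ d : ℤ_[p], d ^ p ^ m = c) ↔ (p : ℤ_[p]) ^ (m + 1) ∣ c - 1)
  | 0, c, hc => by
    constructor
    · intro _; simpa using hc
    · intro _; exact ⟨c, by simp⟩
  | (m + 1), c, hc => by
    have hp := Fact.out (p := p.Prime)
    constructor
    · rintro ⟨d, hd⟩
      have hep : (d ^ p ^ m) ^ p = c := by rw [← pow_mul, ← pow_succ]; exact hd
      have he1 : (p : ℤ_[p]) ∣ d ^ p ^ m - 1 := myFermat _ (by rw [hep]; exact hc)
      obtain ⟨u, hu, hfac⟩ := myStep hodd (d ^ p ^ m) he1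
      obtain ⟨t, ht⟩ := (myMain hodd m (d ^ p ^ m) he1).1 ⟨d, rfl⟩
      have : c - 1 = (p : ℤ_[p]) ^ (m + 1 + 1) * (t * u) := by
        have h1 : c - 1 = (d ^ p ^ m) ^ p - 1 := by rw [hep]
        rw [h1, hfac, ht]; ring
      exact ⟨t * u, this⟩
    · intro hdvd
      have h2 : (p : ℤ_[p]) ^ 2 ∣ c - 1 := dvd_trans (pow_dvd_pow _ (by omega)) hdvd
      obtain ⟨e, hep, he1⟩ := myRoot hodd c h2
      obtain ⟨u, hu, hfac⟩ := myStep hodd e he1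
      have hpne : (p : ℤ_[p]) ≠ 0 := by
        exact_mod_cast Nat.cast_ne_zero.mpr hp.pos.ne'
      have he' : (p : ℤ_[p]) ^ (m + 1) ∣ e - 1 := by
        obtain ⟨v, hv⟩ := hu.exists_right_inv
        obtain ⟨t, ht⟩ := hdvd
        have hfac' : (e - 1) * p * u = (p : ℤ_[p]) ^ (m + 1 + 1) * t := by
          rw [← hfac, ← ht, hep]
        have h3 : (e - 1) * p = ((p : ℤ_[p]) ^ (m + 1) * (t * v)) * p := by
          calc (e - 1) * p = (e - 1) * p * (u * v) := by rw [hv, mul_one]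
            _ = ((e - 1) * p * u) * v := by ring
            _ = (p : ℤ_[p]) ^ (m + 1 + 1) * t * v := by rw [hfac']
            _ = ((p : ℤ_[p]) ^ (m + 1) * (t * v)) * p := by ring
        exact ⟨t * v, mul_right_cancel₀ hpne h3⟩
      obtain ⟨d, hd⟩ := (myMain hodd m e he1).2 he'
      exact ⟨d, by rw [pow_succ, pow_mul, hd, hep]⟩

-- transfer between roots of a in ℚ_p and roots of a^(p-1) in ℤ_p
lemma myTransfer (m : ℕ) (a : ℤ_[p]) (ha : ¬ (p : ℤ_[p]) ∣ a) :
    (∃ b : ℚ_[p], b ^ p ^ m = (a : ℚ_[p])) ↔ ∃ d : ℤ_[p], d ^ p ^ m = a ^ (p - 1) := by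
  have hp := Fact.out (p := p.Prime)
  have hnorm_a : ‖a‖ = 1 := by
    rcases lt_or_eq_of_le (PadicInt.norm_le_one a) with h | h
    · exact absurd ((PadicInt.norm_lt_one_iff_dvd a).1 h) ha
    · exact h
  have hane : (a : ℚ_[p]) ≠ 0 := by
    intro h
    apply ha
    have : a = 0 := Subtype.coe_injective h
    rw [this]; exact dvd_zero _
  have hpm : p ^ m ≠ 0 := pow_ne_zero m hp.pos.ne'
  constructor
  · rintro ⟨b, hb⟩
    have hnb : ‖b‖ = 1 := by
      have h1 : ‖b‖ ^ p ^ m = 1 := by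
        rw [← norm_pow, hb, ← PadicInt.norm_def, hnorm_a]
      rcases lt_trichotomy ‖b‖ 1 with h | h | h
      · have := pow_lt_one₀ (norm_nonneg b) h hpm
        rw [h1] at this; exact absurd this (lt_irrefl 1)
      · exact h
      · have := one_lt_pow₀ h hpm
        rw [h1] at this; exact absurd this (lt_irrefl 1)
    refine ⟨⟨b ^ (p - 1), by rw [norm_pow, hnb, one_pow]⟩, ?_⟩
    apply Subtype.coe_injective
    push_cast
    show (b ^ (p - 1)) ^ p ^ m = (a : ℚ_[p]) ^ (p - 1)
    rw [← pow_mul, mul_comm, pow_mul, hb]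
  · rintro ⟨d, hd⟩
    have hd' : (d : ℚ_[p]) ^ p ^ m = (a : ℚ_[p]) ^ (p - 1) := by
      exact_mod_cast congrArg (Subtype.val) hd
    have hdne : (d : ℚ_[p]) ≠ 0 := by
      intro h
      rw [h, zero_pow hpm] at hd'
      exact hane ((pow_eq_zero_iff (show p - 1 ≠ 0 by have := hp.two_le; omega)).1 hd'.symm)
    have hcop : IsCoprime ((p - 1 : ℕ) : ℤ) ((p ^ m : ℕ) : ℤ) := by
      rw [Nat.isCoprime_iff_coprime]
      refine Nat.Coprime.pow_right m (Nat.Coprime.symm (hp.coprime_iff_not_dvd.2 ?_))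
      intro hdvd
      have h2 := hp.two_le
      have := Nat.le_of_dvd (by omega) hdvd
      omega
    obtain ⟨u, v, huv⟩ := hcop
    refine ⟨(d : ℚ_[p]) ^ u * (a : ℚ_[p]) ^ v, ?_⟩
    have h1 : ((d : ℚ_[p]) ^ u * (a : ℚ_[p]) ^ v) ^ ((p ^ m : ℕ) : ℤ)
        = (d : ℚ_[p]) ^ (((p ^ m : ℕ) : ℤ) * u) * (a : ℚ_[p]) ^ (((p ^ m : ℕ) : ℤ) * v) := by
      rw [mul_zpow, ← zpow_mul, ← zpow_mul, mul_comm u, mul_comm v]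
    have h2 : (d : ℚ_[p]) ^ (((p ^ m : ℕ) : ℤ) * u) = (a : ℚ_[p]) ^ (((p - 1 : ℕ) : ℤ) * u) := by
      rw [zpow_mul, zpow_mul, zpow_natCast, zpow_natCast, hd']
    calc ((d : ℚ_[p]) ^ u * (a : ℚ_[p]) ^ v) ^ p ^ m
        = ((d : ℚ_[p]) ^ u * (a : ℚ_[p]) ^ v) ^ ((p ^ m : ℕ) : ℤ) := by rw [zpow_natCast]
      _ = (a : ℚ_[p]) ^ (((p - 1 : ℕ) : ℤ) * u) * (a : ℚ_[p]) ^ (((p ^ m : ℕ) : ℤ) * v) := by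
          rw [h1, h2]
      _ = (a : ℚ_[p]) ^ (((p - 1 : ℕ) : ℤ) * u + ((p ^ m : ℕ) : ℤ) * v) := by
          rw [zpow_add₀ hane]
      _ = (a : ℚ_[p]) ^ (1 : ℤ) := by
          congr 1
          linarith [huv]
      _ = (a : ℚ_[p]) := zpow_one _

theorem stmt_16 (p : ℕ) [Fact p.Prime] (hodd : Odd p) (r : ℕ)
    (a : ℤ_[p]) (ha : ¬ (p : ℤ_[p]) ∣ a) :
    ((∃ b : ℚ_[p], b ^ p ^ r = (a : ℚ_[p])) ↔ (p : ℤ_[p]) ^ (r + 1) ∣ (a ^ (p - 1) - 1)) ∧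
    ∀ s : ℕ, 0 < s → s ≤ r →
      (((∃ b : ℚ_[p], b ^ p ^ (r - s) = (a : ℚ_[p])) ∧
          ¬ ∃ b : ℚ_[p], b ^ p ^ (r - s + 1) = (a : ℚ_[p])) ↔
        (a ^ (p - 1) - 1).valuation = (r : ℤ) - s + 1) := by
  have hp := Fact.out (p := p.Prime)
  have hc : (p : ℤ_[p]) ∣ a ^ (p - 1) - 1 := by
    rw [myDvdIffToZMod]
    have haz : PadicInt.toZMod a ≠ 0 := fun h => ha ((myDvdIffToZMod a).2 h)
    rw [map_sub, map_pow, map_one, ZMod.pow_card_sub_one_eq_one haz, sub_self]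
  have key : ∀ m : ℕ, (∃ b : ℚ_[p], b ^ p ^ m = (a : ℚ_[p])) ↔
      (p : ℤ_[p]) ^ (m + 1) ∣ a ^ (p - 1) - 1 :=
    fun m => (myTransfer m a ha).trans (myMain hodd m _ hc)
  refine ⟨key r, fun s hs hsr => ?_⟩
  rw [key (r - s), key (r - s + 1)]
  rcases eq_or_ne (a ^ (p - 1) - 1) 0 with h0 | h0
  · constructor
    · rintro ⟨-, h2⟩
      exact absurd (h0 ▸ dvd_zero _) h2
    · intro h
      rw [h0, PadicInt.valuation_zero] at h
      omega
  · have hdvd_iff : ∀ n : ℕ, ((p : ℤ_[p]) ^ n ∣ a ^ (p - 1) - 1 ↔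
        (n : ℤ) ≤ (a ^ (p - 1) - 1).valuation) := fun n => by
      rw [← Ideal.mem_span_singleton, PadicInt.mem_span_pow_iff_le_valuation _ h0]; exact Nat.cast_le.symm
    rw [hdvd_iff, hdvd_iff]
    constructor
    · rintro ⟨h1, h2⟩
      omega
    · intro h
      exact ⟨by omega, by omega⟩
end

section
/- Let p be an odd prime and b ∈ ℤ_p a unit with v_p(b^{p−1} − 1) = 1. Set K_i = ℚ_p(ζ_p, b^{1/p^i}). Then for each i ≥ 1, the element π_i = (1 − ζ_p) / ∏_{j=1}^{i} (b^{1/p^{j−1}} − b^{1/p^j}) is a uniformizer of K_i, and the unique ramification break of the degree-p cyclic extension K_i/K_{i−1} is b_i = 1 + p(p^{i−1} − 1). -/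
set_option linter.unusedSectionVars false
set_option linter.unusedVariables false


section ValLemmas

variable {K : Type*} [Field K] (v : K → ℤ)
  (hm : ∀ x y : K, x ≠ 0 → y ≠ 0 → v (x * y) = v x + v y)
  (ha : ∀ x y : K, x ≠ 0 → y ≠ 0 → x + y ≠ 0 → min (v x) (v y) ≤ v (x + y))

include hm

theorem my_v_one : v 1 = 0 := by
  have h := hm 1 1 one_ne_zero one_ne_zero
  rw [mul_one] at h; omega

theorem my_v_neg (x : K) (hx : x ≠ 0) : v (-x) = v x := by
  have h1 : v (-1 : K) = 0 := by
    have h := hm (-1) (-1) (by norm_num) (by norm_num)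
    rw [neg_mul_neg, mul_one, my_v_one v hm] at h; omega
  have h := hm (-1) x (by norm_num) hx
  rw [neg_one_mul] at h; omega

theorem my_v_pow (x : K) (hx : x ≠ 0) (n : ℕ) : v (x ^ n) = n * v x := by
  induction n with
  | zero => simpa using my_v_one v hm
  | succ n ih =>
      rw [pow_succ, hm _ x (pow_ne_zero n hx) hx, ih]
      push_cast; ring

theorem my_v_inv (x : K) (hx : x ≠ 0) : v x⁻¹ = - v x := by
  have h := hm x x⁻¹ hx (inv_ne_zero hx)
  rw [mul_inv_cancel₀ hx, my_v_one v hm] at h; omega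

theorem my_v_div (x y : K) (hx : x ≠ 0) (hy : y ≠ 0) : v (x / y) = v x - v y := by
  rw [div_eq_mul_inv, hm x y⁻¹ hx (inv_ne_zero hy), my_v_inv v hm y hy]; ring

include ha

theorem my_v_add_eq (x y : K) (hx : x ≠ 0) (hy : y ≠ 0) (h : v x < v y) :
    x + y ≠ 0 ∧ v (x + y) = v x := by
  have hne : x + y ≠ 0 := by
    intro h0
    have : y = -x := by linear_combination h0
    rw [this, my_v_neg v hm x hx] at h; omega
  refine ⟨hne, ?_⟩
  have h1 := ha x y hx hy hne
  have h2 := ha (x + y) (-y) hne (neg_ne_zero.mpr hy)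
  rw [add_neg_cancel_right] at h2
  rw [my_v_neg v hm y hy] at h2
  have h2' := h2 hx
  omega

theorem my_v_sum_ge {ι : Type*} (s : Finset ι) (f : ι → K) (c : ℤ)
    (h : ∀ j ∈ s, f j ≠ 0 ∧ c ≤ v (f j)) :
    (∑ j ∈ s, f j) = 0 ∨ ((∑ j ∈ s, f j) ≠ 0 ∧ c ≤ v (∑ j ∈ s, f j)) := by
  classical
  induction s using Finset.induction_on with
  | empty => left; simp
  | @insert a s hni ih =>
      rw [Finset.sum_insert hni]
      have hfa := h a (Finset.mem_insert_self a s)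
      rcases ih (fun j hj => h j (Finset.mem_insert_of_mem hj)) with h0 | ⟨hne, hge⟩
      · rw [h0, add_zero]; right; exact hfa
      · by_cases hz : f a + ∑ j ∈ s, f j = 0
        · left; exact hz
        · right
          refine ⟨hz, le_trans (le_min hfa.2 hge) (ha _ _ hfa.1 hne hz)⟩

theorem my_v_add_sum {ι : Type*} (x : K) (hx : x ≠ 0) (s : Finset ι) (f : ι → K)
    (h : ∀ j ∈ s, f j ≠ 0 ∧ v x < v (f j)) :
    (x + ∑ j ∈ s, f j) ≠ 0 ∧ v (x + ∑ j ∈ s, f j) = v x := by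
  rcases my_v_sum_ge v hm ha s f (v x + 1) (fun j hj => ⟨(h j hj).1, by have := (h j hj).2; omega⟩)
    with h0 | ⟨hne, hge⟩
  · rw [h0, add_zero]; exact ⟨hx, rfl⟩
  · exact my_v_add_eq v hm ha x _ hx hne (by omega)

theorem my_v_sum_min {ι : Type*} [DecidableEq ι] (s : Finset ι) (f : ι → K) (a : ι)
    (has : a ∈ s) (h0 : ∀ j ∈ s, f j ≠ 0)
    (hlt : ∀ j ∈ s, j ≠ a → v (f a) < v (f j)) :
    (∑ j ∈ s, f j) ≠ 0 ∧ v (∑ j ∈ s, f j) = v (f a) := by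
  rw [← Finset.add_sum_erase s f has]
  exact my_v_add_sum v hm ha (f a) (h0 a has) (s.erase a) f
    (fun j hj => ⟨h0 j (Finset.mem_of_mem_erase hj),
      hlt j (Finset.mem_of_mem_erase hj) (Finset.ne_of_mem_erase hj)⟩)

theorem my_v_prod {ι : Type*} (s : Finset ι) (f : ι → K) (h0 : ∀ j ∈ s, f j ≠ 0) :
    v (∏ j ∈ s, f j) = ∑ j ∈ s, v (f j) := by
  classical
  induction s using Finset.induction_on with
  | empty => simpa using my_v_one v hm
  | @insert a s hni ih =>
      rw [Finset.prod_insert hni, Finset.sum_insert hni,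
        hm _ _ (h0 a (Finset.mem_insert_self a s))
          (Finset.prod_ne_zero_iff.mpr fun j hj => h0 j (Finset.mem_insert_of_mem hj)),
        ih (fun j hj => h0 j (Finset.mem_insert_of_mem hj))]

end ValLemmas

section Binomial

variable {K : Type*} [Field K] [CharZero K] (v : K → ℤ)
  (hm : ∀ x y : K, x ≠ 0 → y ≠ 0 → v (x * y) = v x + v y)
  (ha : ∀ x y : K, x ≠ 0 → y ≠ 0 → x + y ≠ 0 → min (v x) (v y) ≤ v (x + y))
  (p : ℕ) (hp : p.Prime) (i : ℕ)
  (hvp : v ((p : ℕ) : K) = ((p : ℤ) - 1) * (p : ℤ) ^ i)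
  (hvn : ∀ n : ℕ, n ≠ 0 → 0 ≤ v ((n : ℕ) : K))

theorem my_binomial_id (hp1 : 1 ≤ p) (x : K) :
    x ^ p - 1 = ∑ k ∈ Finset.range p, (x - 1) ^ (k + 1) * ((p.choose (k + 1) : ℕ) : K) := by
  have h := add_pow (x - 1) (1 : K) p
  simp only [one_pow, mul_one, sub_add_cancel] at h
  rw [Finset.sum_range_succ'] at h
  simp only [pow_zero, Nat.choose_zero_right, Nat.cast_one, one_mul] at h
  rw [sub_eq_iff_eq_add]
  exact h

include hm ha hp hvp hvn

-- x ≠ 1, term facts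
theorem my_term_ne (x : K) (hx : x ≠ 1) {k : ℕ} (hk : k < p) :
    (x - 1) ^ (k + 1) * ((p.choose (k + 1) : ℕ) : K) ≠ 0 := by
  have h1 : x - 1 ≠ 0 := sub_ne_zero.mpr hx
  have h2 : 0 < p.choose (k + 1) := Nat.choose_pos (by omega)
  exact mul_ne_zero (pow_ne_zero _ h1) (Nat.cast_ne_zero.mpr (by omega))

theorem my_term_v (x : K) (hx : x ≠ 1) {k : ℕ} (hk : k < p) :
    v ((x - 1) ^ (k + 1) * ((p.choose (k + 1) : ℕ) : K)) =
      (k + 1 : ℤ) * v (x - 1) + v ((p.choose (k + 1) : ℕ) : K) := by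
  have h1 : x - 1 ≠ 0 := sub_ne_zero.mpr hx
  have h2 : 0 < p.choose (k + 1) := Nat.choose_pos (by omega)
  rw [hm _ _ (pow_ne_zero _ h1) (Nat.cast_ne_zero.mpr (by omega)),
    my_v_pow v hm _ h1]
  push_cast; ring

theorem my_choose_v_ge {k : ℕ} (hk0 : k ≠ 0) (hk : k < p) :
    ((p : ℤ) - 1) * (p : ℤ) ^ i ≤ v ((p.choose k : ℕ) : K) := by
  obtain ⟨m, hmeq⟩ := hp.dvd_choose_self hk0 hk
  have hm0 : m ≠ 0 := by
    rintro rfl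
    have := Nat.choose_pos (le_of_lt hk)
    omega
  have : ((p.choose k : ℕ) : K) = ((p : ℕ) : K) * ((m : ℕ) : K) := by
    rw [hmeq]; push_cast; ring
  rw [this, hm _ _ (Nat.cast_ne_zero.mpr hp.ne_zero) (Nat.cast_ne_zero.mpr hm0), hvp]
  have := hvn m hm0
  omega

theorem my_lemA (x : K) (hx : x ≠ 1) (hs : v (x - 1) < (p : ℤ) ^ i) :
    x ^ p - 1 ≠ 0 ∧ v (x ^ p - 1) = (p : ℤ) * v (x - 1) := by
  have hp1 : 1 ≤ p := hp.one_le
  have hp2 : 2 ≤ p := hp.two_le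
  have h1 : x - 1 ≠ 0 := sub_ne_zero.mpr hx
  have hpi : (0:ℤ) < (p : ℤ) ^ i := pow_pos (by exact_mod_cast hp.pos) i
  rw [my_binomial_id p hp1 x]
  have hmem : p - 1 ∈ Finset.range p := Finset.mem_range.mpr (by omega)
  have hlast : v ((x - 1) ^ ((p - 1) + 1) * ((p.choose ((p - 1) + 1) : ℕ) : K)) =
      (p : ℤ) * v (x - 1) := by
    have hpp : p - 1 + 1 = p := by omega
    rw [hpp, Nat.choose_self, Nat.cast_one, mul_one, my_v_pow v hm _ h1]
  have := my_v_sum_min v hm ha (Finset.range p)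
    (fun k => (x - 1) ^ (k + 1) * ((p.choose (k + 1) : ℕ) : K)) (p - 1) hmem
    (fun k hk => my_term_ne v hm ha p hp i hvp hvn x hx (Finset.mem_range.mp hk))
    (fun k hk hkne => by
      have hkp : k < p := Finset.mem_range.mp hk
      have hkp1 : k < p - 1 := by omega
      rw [hlast, my_term_v v hm ha p hp i hvp hvn x hx hkp]
      have hcv := my_choose_v_ge v hm ha p hp i hvp hvn (k := k + 1) (by omega) (by omega)
      set s := v (x - 1)
      rcases le_or_gt s 0 with hs0 | hs0
      · nlinarith
      · nlinarith)
  rw [hlast] at this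
  exact this

theorem my_lemB (x : K) (hx : x ≠ 1) (hs : (p : ℤ) ^ i < v (x - 1)) :
    x ^ p - 1 ≠ 0 := by
  have hp1 : 1 ≤ p := hp.one_le
  have hp2 : 2 ≤ p := hp.two_le
  have h1 : x - 1 ≠ 0 := sub_ne_zero.mpr hx
  have hpi : (0:ℤ) < (p : ℤ) ^ i := pow_pos (by exact_mod_cast hp.pos) i
  rw [my_binomial_id p hp1 x]
  have hmem : 0 ∈ Finset.range p := Finset.mem_range.mpr (by omega)
  have hfirst : v ((x - 1) ^ (0 + 1) * ((p.choose (0 + 1) : ℕ) : K)) =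
      v (x - 1) + ((p : ℤ) - 1) * (p : ℤ) ^ i := by
    rw [my_term_v v hm ha p hp i hvp hvn x hx (by omega)]
    rw [Nat.choose_one_right, hvp]; ring
  refine (my_v_sum_min v hm ha (Finset.range p)
    (fun k => (x - 1) ^ (k + 1) * ((p.choose (k + 1) : ℕ) : K)) 0 hmem
    (fun k hk => my_term_ne v hm ha p hp i hvp hvn x hx (Finset.mem_range.mp hk))
    (fun k hk hkne => ?_)).1
  have hkp : k < p := Finset.mem_range.mp hk
  rw [hfirst, my_term_v v hm ha p hp i hvp hvn x hx hkp]
  rcases eq_or_lt_of_le (show k + 1 ≤ p by omega) with hke | hkl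
  · -- k = p - 1 : choose = 1, v = 0
    have : p.choose (k + 1) = 1 := by rw [hke, Nat.choose_self]
    rw [this, Nat.cast_one, my_v_one v hm]
    have : (k : ℤ) + 1 = (p : ℤ) := by exact_mod_cast congrArg (Nat.cast (R := ℤ)) hke
    rw [this]
    set s := v (x - 1)
    nlinarith
  · have hcv := my_choose_v_ge v hm ha p hp i hvp hvn (k := k + 1) (by omega) (by omega)
    set s := v (x - 1)
    have hk1 : (1:ℤ) ≤ k := by
      rcases Nat.eq_zero_or_pos k with rfl | hk0
      · exact absurd rfl hkne
      · exact_mod_cast hk0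
    nlinarith

theorem my_lemC (x : K) (hx : x ≠ 1) (hs : (p : ℤ) ^ i ≤ v (x - 1)) :
    x ^ p - 1 = 0 ∨ ((p : ℤ) - 1) * (p : ℤ) ^ i + (p : ℤ) ^ i ≤ v (x ^ p - 1) := by
  have hp1 : 1 ≤ p := hp.one_le
  have hp2 : 2 ≤ p := hp.two_le
  have h1 : x - 1 ≠ 0 := sub_ne_zero.mpr hx
  have hpi : (0:ℤ) < (p : ℤ) ^ i := pow_pos (by exact_mod_cast hp.pos) i
  rw [my_binomial_id p hp1 x]
  have hterms : ∀ k ∈ Finset.range p,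
      (x - 1) ^ (k + 1) * ((p.choose (k + 1) : ℕ) : K) ≠ 0 ∧
      ((p : ℤ) - 1) * (p : ℤ) ^ i + (p : ℤ) ^ i ≤
        v ((x - 1) ^ (k + 1) * ((p.choose (k + 1) : ℕ) : K)) := by
    intro k hk
    have hkp : k < p := Finset.mem_range.mp hk
    refine ⟨my_term_ne v hm ha p hp i hvp hvn x hx hkp, ?_⟩
    rw [my_term_v v hm ha p hp i hvp hvn x hx hkp]
    set s := v (x - 1) with hsdef
    rcases eq_or_lt_of_le (show k + 1 ≤ p by omega) with hke | hkl
    · have : p.choose (k + 1) = 1 := by rw [hke, Nat.choose_self]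
      rw [this, Nat.cast_one, my_v_one v hm]
      have hke' : (k : ℤ) + 1 = (p : ℤ) := by exact_mod_cast congrArg (Nat.cast (R := ℤ)) hke
      rw [hke']
      nlinarith
    · have hcv := my_choose_v_ge v hm ha p hp i hvp hvn (k := k + 1) (by omega) (by omega)
      nlinarith
  rcases my_v_sum_ge v hm ha (Finset.range p)
    (fun k => (x - 1) ^ (k + 1) * ((p.choose (k + 1) : ℕ) : K))
    (((p : ℤ) - 1) * (p : ℤ) ^ i + (p : ℤ) ^ i) hterms with h0 | ⟨_, hge⟩
  · exact Or.inl h0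
  · exact Or.inr hge

end Binomial

theorem my_geom (q : ℤ) : ∀ i : ℕ,
    ∑ j ∈ Finset.range i, (q - 1) * q ^ (i - (j + 1)) = q ^ i - 1 := by
  intro i
  induction i with
  | zero => simp
  | succ n ihn =>
      rw [Finset.sum_range_succ']
      simp only [Nat.succ_sub_succ, Nat.add_sub_cancel, Nat.sub_zero]
      rw [ihn, pow_succ]
      ring


/-- The uniformizer and ramification break of the degree-`p` cyclic extension
`K_i = ℚ_p(ζ_p, b^{1/pⁱ})` over `K_{i-1}`, for a unit `b` with `v_p(b^{p-1}-1) = 1`.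
Here `K` plays the role of `K_i`, the function `v` is the normalized valuation of
`K_i` (characterized by being a surjective additive valuation extending
`(p-1)pⁱ` times the `p`-adic valuation, since `K_i/ℚ_p` is totally ramified of
degree `(p-1)pⁱ`), and a nontrivial `σ ∈ Gal(K_i/K_{i-1})` is an automorphism of
`K` fixing `ζ_p` and `b^{1/p^{i-1}}` but not `b^{1/pⁱ}`.  The conclusion
`v(σπᵢ - πᵢ) = 1 + bᵢ` for all such `σ` says precisely that `πᵢ` is a uniformizer
and the unique ramification break of `K_i/K_{i-1}` is `bᵢ = 1 + p(p^{i-1} - 1)`. -/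
theorem stmt_18 (p : ℕ) [Fact p.Prime] (hodd : Odd p)
    (b : ℤ_[p]) (hbu : ¬ (p : ℤ_[p]) ∣ b) (hb1 : (b ^ (p - 1) - 1).valuation = 1)
    (i : ℕ) (hi : 1 ≤ i)
    {K : Type*} [Field K] [Algebra ℚ_[p] K]
    (ζ : K) (hζ : IsPrimitiveRoot ζ p)
    (β : ℕ → K) (hβ0 : β 0 = algebraMap ℚ_[p] K (b : ℚ_[p]))
    (hβ : ∀ j, (β (j + 1)) ^ p = β j)
    (htop : IntermediateField.adjoin ℚ_[p] ({ζ, β i} : Set K) = ⊤)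
    -- `v` is the normalized valuation of `K = K_i`
    (v : K → ℤ)
    (hv_mul : ∀ x y : K, x ≠ 0 → y ≠ 0 → v (x * y) = v x + v y)
    (hv_add : ∀ x y : K, x ≠ 0 → y ≠ 0 → x + y ≠ 0 → min (v x) (v y) ≤ v (x + y))
    (hv_ext : ∀ x : ℚ_[p], x ≠ 0 →
      v (algebraMap ℚ_[p] K x) = ((p - 1 : ℤ) * (p : ℤ) ^ i) * x.valuation)
    (hv_surj : ∀ n : ℤ, ∃ x : K, x ≠ 0 ∧ v x = n) :
    v ((1 - ζ) / ∏ j ∈ Finset.range i, (β j - β (j + 1))) = 1 ∧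
      ∀ σ : K ≃ₐ[ℚ_[p]] K, σ ζ = ζ → σ (β (i - 1)) = β (i - 1) → σ (β i) ≠ β i →
        v (σ ((1 - ζ) / ∏ j ∈ Finset.range i, (β j - β (j + 1))) -
            (1 - ζ) / ∏ j ∈ Finset.range i, (β j - β (j + 1))) =
          1 + (1 + (p : ℤ) * ((p : ℤ) ^ (i - 1) - 1)) := by
  classical
  have hp : p.Prime := Fact.out
  have hp2 : 2 ≤ p := hp.two_le
  haveI : CharZero K := charZero_of_injective_algebraMap (algebraMap ℚ_[p] K).injective
  have hppos : (0:ℤ) < (p:ℤ) := by exact_mod_cast hp.pos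
  have hpi : (0:ℤ) < (p:ℤ) ^ i := pow_pos hppos i
  have hvn : ∀ n : ℕ, n ≠ 0 → 0 ≤ v ((n : ℕ) : K) := by
    intro n hn
    rw [← map_natCast (algebraMap ℚ_[p] K) n,
      hv_ext _ (Nat.cast_ne_zero.mpr hn), Padic.valuation_natCast]
    have h1 : (0:ℤ) ≤ (p:ℤ) - 1 := by omega
    have h2 : (0:ℤ) ≤ (padicValNat p n : ℤ) := Int.natCast_nonneg _
    positivity
  have hvp : v ((p : ℕ) : K) = ((p:ℤ) - 1) * (p:ℤ) ^ i := by
    rw [← map_natCast (algebraMap ℚ_[p] K) p,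
      hv_ext _ (Nat.cast_ne_zero.mpr hp.ne_zero), Padic.valuation_p, mul_one]
  -- b is a unit
  have hbne : b ≠ 0 := fun h => hbu (h ▸ dvd_zero _)
  have hbQne : (b : ℚ_[p]) ≠ 0 := PadicInt.coe_ne_zero.mpr hbne
  have hbval : ((b : ℚ_[p])).valuation = 0 := by
    have h1 : b.valuation = 0 := by
      by_contra h
      have h2 : ((1:ℕ):ℤ) ≤ b.valuation := by
        have := Int.natCast_nonneg b.valuation
        omega
      have h3 : ‖b‖ ≤ (p:ℝ) ^ (-(1:ℕ) : ℤ) :=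
        (PadicInt.norm_le_pow_iff_le_valuation b hbne 1).mpr (by exact_mod_cast h2)
      have h4 : ‖b‖ < 1 := by
        refine lt_of_le_of_lt h3 ?_
        rw [show (-(1:ℕ) : ℤ) = -1 by norm_num, zpow_neg_one]
        rw [inv_lt_one_iff₀]
        right
        exact_mod_cast hp.one_lt
      exact hbu ((PadicInt.norm_lt_one_iff_dvd b).mp h4)
    rw [PadicInt.valuation_coe, h1, Nat.cast_zero]
  -- β j are units
  have hβfacts : ∀ j, β j ≠ 0 ∧ v (β j) = 0 := by
    intro j
    induction j with
    | zero =>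
        constructor
        · rw [hβ0]
          exact fun h => hbQne ((algebraMap ℚ_[p] K).injective (by rw [h, map_zero]))
        · rw [hβ0, hv_ext _ hbQne, hbval, mul_zero]
    | succ j ih =>
        have hne : β (j+1) ≠ 0 := by
          intro h
          exact ih.1 (by rw [← hβ j, h, zero_pow hp.ne_zero])
        refine ⟨hne, ?_⟩
        have h := my_v_pow v hv_mul (β (j+1)) hne p
        rw [hβ j, ih.2] at h
        rcases mul_eq_zero.mp h.symm with h0 | h0
        · exfalso; omega
        · exact h0
  -- the key valuation of β j ^ (p-1) - 1
  have ht : ∀ j, j ≤ i →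
      (β j ^ (p-1) - 1 ≠ 0 ∧ v (β j ^ (p-1) - 1) = ((p:ℤ) - 1) * (p:ℤ) ^ (i - j)) := by
    intro j
    induction j with
    | zero =>
        intro _
        have hbb : (b ^ (p-1) - 1 : ℤ_[p]) ≠ 0 := by
          intro h
          rw [h, PadicInt.valuation_zero] at hb1
          exact absurd hb1 (by norm_num)
        have hqb : ((b ^ (p-1) - 1 : ℤ_[p]) : ℚ_[p]) ≠ 0 := PadicInt.coe_ne_zero.mpr hbb
        have heq : β 0 ^ (p-1) - 1
            = algebraMap ℚ_[p] K (((b ^ (p-1) - 1 : ℤ_[p])) : ℚ_[p]) := by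
          rw [hβ0, ← map_pow, ← map_one (algebraMap ℚ_[p] K), ← map_sub]
          congr 1
        have hval : ((b ^ (p-1) - 1 : ℤ_[p]) : ℚ_[p]).valuation = 1 := by
          rw [PadicInt.valuation_coe, hb1, Nat.cast_one]
        constructor
        · rw [heq]
          exact fun h => hqb ((algebraMap ℚ_[p] K).injective (by rw [h, map_zero]))
        · rw [heq, hv_ext _ hqb, hval, mul_one, Nat.sub_zero]
    | succ j ih =>
        intro hj1
        obtain ⟨ihne, ihv⟩ := ih (by omega)
        have hxp : (β (j+1) ^ (p-1)) ^ p = β j ^ (p-1) := by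
          rw [← pow_mul, mul_comm, pow_mul, hβ j]
        have hx1 : β (j+1) ^ (p-1) ≠ 1 := by
          intro h
          exact ihne (by rw [← hxp, h, one_pow, sub_self])
        rcases lt_or_ge (v (β (j+1) ^ (p-1) - 1)) ((p:ℤ) ^ i) with hlt | hge
        · obtain ⟨-, hA⟩ := my_lemA v hv_mul hv_add p hp i hvp hvn _ hx1 hlt
          rw [hxp, ihv] at hA
          have hij : i - j = (i - (j+1)) + 1 := by omega
          refine ⟨sub_ne_zero.mpr hx1, ?_⟩
          have h2 : (p:ℤ) * (((p:ℤ) - 1) * (p:ℤ) ^ (i - (j+1)))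
              = (p:ℤ) * v (β (j+1) ^ (p-1) - 1) := by
            rw [← hA, hij, pow_succ]; ring
          exact (mul_left_cancel₀ (ne_of_gt hppos) h2).symm
        · exfalso
          rcases my_lemC v hv_mul hv_add p hp i hvp hvn _ hx1 hge with h0 | hbig
          · rw [hxp] at h0; exact ihne h0
          · rw [hxp, ihv] at hbig
            have hle : (p:ℤ) ^ (i - j) ≤ (p:ℤ) ^ i :=
              pow_le_pow_right₀ (by omega) (by omega)
            nlinarith
  -- roots of unity
  have vroot : ∀ ξ : K, ξ ^ p = 1 → ξ ≠ 1 → v (ξ - 1) = (p:ℤ) ^ i := by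
    intro ξ hξp hξ1
    have h0 : ξ ^ p - 1 = 0 := by rw [hξp, sub_self]
    rcases lt_trichotomy (v (ξ - 1)) ((p:ℤ) ^ i) with h | h | h
    · exact absurd h0 (my_lemA v hv_mul hv_add p hp i hvp hvn ξ hξ1 h).1
    · exact h
    · exact absurd h0 (my_lemB v hv_mul hv_add p hp i hvp hvn ξ hξ1 h)
  have hζne1 : ζ ≠ 1 := hζ.ne_one hp.one_lt
  have hζsub : (1:K) - ζ ≠ 0 := sub_ne_zero.mpr (Ne.symm hζne1)
  have hv1ζ : v (1 - ζ) = (p:ℤ) ^ i := by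
    rw [show (1:K) - ζ = -(ζ - 1) by ring, my_v_neg v hv_mul _ (sub_ne_zero.mpr hζne1)]
    exact vroot ζ hζ.pow_eq_one hζne1
  -- differences
  have hdiff : ∀ j, j < i →
      (β j - β (j+1) ≠ 0 ∧ v (β j - β (j+1)) = ((p:ℤ) - 1) * (p:ℤ) ^ (i - (j+1))) := by
    intro j hj
    obtain ⟨hne, hvv⟩ := ht (j+1) (by omega)
    have heq : β j - β (j+1) = β (j+1) * (β (j+1) ^ (p-1) - 1) := by
      have hps : β (j+1) ^ p = β (j+1) ^ (p-1) * β (j+1) := by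
        conv_lhs => rw [show p = (p-1) + 1 by omega]
        rw [pow_succ]
      rw [← hβ j, hps]
      ring
    have hβjne := (hβfacts (j+1)).1
    rw [heq]
    exact ⟨mul_ne_zero hβjne hne, by
      rw [hv_mul _ _ hβjne hne, (hβfacts (j+1)).2, hvv, zero_add]⟩
  set P := ∏ j ∈ Finset.range i, (β j - β (j + 1)) with hPdef
  have hPne : P ≠ 0 :=
    Finset.prod_ne_zero_iff.mpr fun j hj => (hdiff j (Finset.mem_range.mp hj)).1
  have hvP : v P = (p:ℤ) ^ i - 1 := by
    rw [hPdef, my_v_prod v hv_mul hv_add _ _ (fun j hj => (hdiff j (Finset.mem_range.mp hj)).1),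
      Finset.sum_congr rfl (fun j hj => (hdiff j (Finset.mem_range.mp hj)).2)]
    exact my_geom (p:ℤ) i
  constructor
  · rw [my_v_div v hv_mul _ _ hζsub hPne, hv1ζ, hvP]
    ring
  · intro σ hσζ hσβ hσβi
    have hi1 : i - 1 + 1 = i := by omega
    have hpowβ : ∀ j k, β j = β (j + k) ^ (p ^ k) := by
      intro j k
      induction k with
      | zero => simp
      | succ k ihk =>
          calc β j = β (j + k) ^ (p ^ k) := ihk
          _ = (β (j + k + 1) ^ p) ^ (p ^ k) := by rw [hβ (j + k)]
          _ = β (j + (k + 1)) ^ (p ^ (k + 1)) := by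
              rw [← pow_mul, ← pow_succ']
              rfl
    have hfixβ : ∀ j, j ≤ i - 1 → σ (β j) = β j := by
      intro j hj
      have h := hpowβ j ((i-1) - j)
      rw [show j + ((i-1) - j) = i - 1 by omega] at h
      rw [h, map_pow, hσβ]
    have hβine := (hβfacts i).1
    have hβi1ne := (hβfacts (i-1)).1
    set c := σ (β i) with hcdef
    have hβipβ : β i ^ p = β (i-1) := by
      have h := hβ (i-1)
      rw [hi1] at h
      exact h
    have hξp : (c / β i) ^ p = 1 := by
      rw [div_pow, hcdef, ← map_pow, hβipβ, hσβ, div_self hβi1ne]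
    have hξ1 : c / β i ≠ 1 := by
      intro h
      exact hσβi ((div_eq_one_iff_eq hβine).mp h)
    have hcβne : c - β i ≠ 0 := sub_ne_zero.mpr hσβi
    have hvcβ : v (c - β i) = (p:ℤ) ^ i := by
      have hvr := vroot _ hξp hξ1
      have heq : c - β i = β i * (c / β i - 1) := by
        rw [mul_sub, mul_div_cancel₀ _ hβine, mul_one]
      rw [heq, hv_mul _ _ hβine (sub_ne_zero.mpr hξ1), (hβfacts i).2, hvr, zero_add]
    have hL := hdiff (i-1) (by omega)
    rw [hi1, Nat.sub_self, pow_zero, mul_one] at hL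
    obtain ⟨hLne, hvL⟩ := hL
    have hβiC : β i - c ≠ 0 := fun h => hcβne (by linear_combination -h)
    have hvβiC : v (β i - c) = (p:ℤ) ^ i := by
      rw [show β i - c = -(c - β i) by ring, my_v_neg v hv_mul _ hcβne, hvcβ]
    have hppow : (p:ℤ) ≤ (p:ℤ) ^ i := by
      calc (p:ℤ) = (p:ℤ) ^ 1 := (pow_one _).symm
      _ ≤ (p:ℤ) ^ i := pow_le_pow_right₀ (by omega) hi
    have hvM : (β (i-1) - β i) + (β i - c) ≠ 0 ∧
        v ((β (i-1) - β i) + (β i - c)) = (p:ℤ) - 1 := by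
      have := my_v_add_eq v hv_mul hv_add _ _ hLne hβiC (by rw [hvL, hvβiC]; omega)
      rwa [hvL] at this
    have hMeq : β (i-1) - c = (β (i-1) - β i) + (β i - c) := by ring
    have hMne : β (i-1) - c ≠ 0 := by rw [hMeq]; exact hvM.1
    have hvMval : v (β (i-1) - c) = (p:ℤ) - 1 := by rw [hMeq]; exact hvM.2
    set Q := ∏ j ∈ Finset.range (i-1), (β j - β (j + 1)) with hQdef
    have hPQ : P = Q * (β (i-1) - β i) := by
      have h := Finset.prod_range_succ (fun j => β j - β (j + 1)) (i-1)
      rw [hi1] at h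
      exact h
    have hQne : Q ≠ 0 :=
      Finset.prod_ne_zero_iff.mpr fun j hj =>
        (hdiff j (by have := Finset.mem_range.mp hj; omega)).1
    have hvQ : v Q = (p:ℤ) ^ i - (p:ℤ) := by
      have h := hv_mul Q (β (i-1) - β i) hQne hLne
      rw [← hPQ, hvP, hvL] at h
      omega
    have hQfix : ∀ j ∈ Finset.range (i-1), σ (β j - β (j+1)) = β j - β (j+1) := by
      intro j hj
      have hj' := Finset.mem_range.mp hj
      rw [map_sub, hfixβ j (by omega), hfixβ (j+1) (by omega)]
    have hσP : σ P = Q * (β (i-1) - c) := by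
      rw [hPQ, map_mul, map_sub, hfixβ (i-1) le_rfl, ← hcdef]
      congr 1
      rw [hQdef, map_prod]
      exact Finset.prod_congr rfl hQfix
    have hσπ : σ ((1 - ζ)/P) = (1 - ζ) / (Q * (β (i-1) - c)) := by
      rw [map_div₀, map_sub, map_one, hσζ, hσP]
    rw [hσπ]
    have hexp : (1 - ζ) / (Q * (β (i-1) - c)) - (1 - ζ) / P
        = ((1 - ζ) * (c - β i)) / (Q * ((β (i-1) - c) * (β (i-1) - β i))) := by
      rw [hPQ]
      field_simp
      ring
    rw [hexp, my_v_div v hv_mul _ _ (mul_ne_zero hζsub hcβne)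
        (mul_ne_zero hQne (mul_ne_zero hMne hLne)),
      hv_mul _ _ hζsub hcβne, hv_mul _ _ hQne (mul_ne_zero hMne hLne),
      hv_mul _ _ hMne hLne, hv1ζ, hvcβ, hvQ, hvMval, hvL]
    have hpi1 : (p:ℤ) ^ i = (p:ℤ) * (p:ℤ) ^ (i-1) := by
      calc (p:ℤ) ^ i = (p:ℤ) ^ ((i-1)+1) := by rw [hi1]
      _ = (p:ℤ) * (p:ℤ) ^ (i-1) := by rw [pow_succ]; ring
    linarith
end
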